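/- arXiv:1410.2772 — 2 statements merged into one kernel-verified Lean document; each statement's English description precedes it below -/
import Mathlib

section
/- For every integer n ≥ 2, the map w ↦ λ(w) is a bijection from Ω_n onto the set of weakly increasing antisymmetric integer sequences of length n, i.e. onto {a ∈ ℤⁿ : a_1 ≤ a_2 ≤ ⋯ ≤ a_n and a_i + a_{n+1−i} = 0 for all 1 ≤ i ≤ n}. -/
open scoped Classical

noncomputable section

/-- The function underlying the simple generator `s_i` of the affine symmetric group. -/
def sFun (n i : ℕ) (j : ℤ) : ℤ :=
  if (n : ℤ) ∣ j - (i : ℤ) then j + 1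
  else if (n : ℤ) ∣ j - ((i : ℤ) + 1) then j - 1
  else j

lemma sFun_invol (n i : ℕ) (h : ¬ (n : ℤ) ∣ 1) : Function.Involutive (sFun n i) := by
  intro j
  unfold sFun
  by_cases h1 : (n : ℤ) ∣ j - (i : ℤ)
  · have h2 : ¬ (n : ℤ) ∣ (j + 1) - (i : ℤ) := by
      intro hd
      have h3 : (n : ℤ) ∣ ((j + 1) - (i : ℤ)) - (j - (i : ℤ)) := dvd_sub hd h1
      have h4 : ((j + 1) - (i : ℤ)) - (j - (i : ℤ)) = 1 := by ring
      rw [h4] at h3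
      exact h h3
    have h3 : (n : ℤ) ∣ (j + 1) - ((i : ℤ) + 1) := by
      have h4 : (j + 1) - ((i : ℤ) + 1) = j - (i : ℤ) := by ring
      rw [h4]
      exact h1
    rw [if_pos h1, if_neg h2, if_pos h3]
    ring
  · by_cases h2 : (n : ℤ) ∣ j - ((i : ℤ) + 1)
    · have h3 : (n : ℤ) ∣ (j - 1) - (i : ℤ) := by
        have h4 : (j - 1) - (i : ℤ) = j - ((i : ℤ) + 1) := by ring
        rw [h4]
        exact h2
      rw [if_neg h1, if_pos h2, if_pos h3]
      ring
    · rw [if_neg h1, if_neg h2, if_neg h1, if_neg h2]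

/-- The simple generator `s_i` of the affine symmetric group `S̃_n`:
`j ↦ j+1` if `j ≡ i (mod n)`, `j ↦ j-1` if `j ≡ i+1 (mod n)`, `j ↦ j` otherwise.
(For the degenerate case `n = 1`, where this recipe does not define a bijection,
we use the identity; all results below assume `n ≥ 2`.) -/
def sGen (n i : ℕ) : Equiv.Perm ℤ :=
  if h : (n : ℤ) ∣ 1 then 1
  else ⟨sFun n i, sFun n i, sFun_invol n i h, sFun_invol n i h⟩

/-- Membership in the affine symmetric group `S̃_n`: a bijection `w : ℤ → ℤ` with
`w (i + n) = w i + n` for all `i` and `∑_{i=1}^n w i = ∑_{i=1}^n i`. -/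
def IsAffinePerm (n : ℕ) (w : Equiv.Perm ℤ) : Prop :=
  (∀ i : ℤ, w (i + (n : ℤ)) = w i + (n : ℤ)) ∧
    ∑ i ∈ Finset.Icc (1 : ℤ) (n : ℤ), w i = ∑ i ∈ Finset.Icc (1 : ℤ) (n : ℤ), i

/-- The length of `w ∈ S̃_n`: the number of pairs `(i, j)` with `i < j`, `1 ≤ j ≤ n`
and `w i > w j`. -/
def ellA (n : ℕ) (w : Equiv.Perm ℤ) : ℕ :=
  Set.ncard {p : ℤ × ℤ | p.1 < p.2 ∧ 1 ≤ p.2 ∧ p.2 ≤ (n : ℤ) ∧ w p.2 < w p.1}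

/-- The absolute length of an involution `w ∈ S̃_n`:
`(n − #{i ∈ {1,…,n} : w i = i}) / 2`. -/
def ellAbs (n : ℕ) (w : Equiv.Perm ℤ) : ℕ :=
  (n - Set.ncard {i : ℤ | 1 ≤ i ∧ i ≤ (n : ℤ) ∧ w i = i}) / 2

/-- `Ω_n`: involutions in `S̃_n` which are minimal length double coset representatives
for the parabolic subgroup generated by `s_1, …, s_{n-1}`. -/
def OmegaSet (n : ℕ) : Set (Equiv.Perm ℤ) :=
  {w | IsAffinePerm n w ∧ w * w = 1 ∧
    ∀ i : ℕ, 1 ≤ i → i ≤ n - 1 →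
      ellA n (sGen n i * w) = ellA n w + 1 ∧ ellA n (w * sGen n i) = ellA n w + 1}

/-- Inverse of a power series with constant term `1` (via `invOfUnit`). -/
def pinv (f : PowerSeries ℤ) : PowerSeries ℤ := PowerSeries.invOfUnit f 1

/-- Substitution of `q ↦ q²` in a power series: `(sq2 f)(q) = f(q²)`. -/
def sq2 (f : PowerSeries ℤ) : PowerSeries ℤ :=
  PowerSeries.mk fun j => if 2 ∣ j then PowerSeries.coeff (j / 2) f else 0

/-- The `q`-integer `[m]_q = 1 + q + ⋯ + q^{m-1}` as a power series. -/
def qInt (m : ℕ) : PowerSeries ℤ := ∑ i ∈ Finset.range m, (PowerSeries.X : PowerSeries ℤ) ^ i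

/-- The `q`-factorial `[m]_q!`. -/
def qFact (m : ℕ) : PowerSeries ℤ := ∏ k ∈ Finset.range m, qInt (k + 1)

/-- The Gaussian binomial coefficient `binom(m, k)_q = [m]_q!/([k]_q![m-k]_q!)`. -/
def qBinom (m k : ℕ) : PowerSeries ℤ := qFact m * pinv (qFact k * qFact (m - k))

/-- The `q`-Pochhammer symbol `(−q^{k+1}; q)_m = ∏_{j=0}^{m-1} (1 + q^{k+1+j})`. -/
def qPochNeg (k m : ℕ) : PowerSeries ℤ :=
  ∏ j ∈ Finset.range m, (1 + (PowerSeries.X : PowerSeries ℤ) ^ (k + 1 + j))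

/-- The Poincaré series `P̃_n(q) = ∑_{w ∈ S̃_n} q^{ℓ(w)}`, defined coefficientwise:
the coefficient of `q^j` is the (finite) number of `w ∈ S̃_n` with `ℓ(w) = j`. -/
def Ptilde (n : ℕ) : PowerSeries ℤ :=
  PowerSeries.mk fun j =>
    (Nat.card {w : Equiv.Perm ℤ // IsAffinePerm n w ∧ ellA n w = j} : ℤ)

/-- The generating set `{s_i : i ∈ K_w}` where
`K_w = {i ∈ {1,…,n−1} : w s_i w ∈ {s_1,…,s_{n−1}}}`. -/
def Kgens (n : ℕ) (w : Equiv.Perm ℤ) : Set (Equiv.Perm ℤ) :=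
  {y | ∃ i : ℕ, 1 ≤ i ∧ i ≤ n - 1 ∧ y = sGen n i ∧
      ∃ j : ℕ, 1 ≤ j ∧ j ≤ n - 1 ∧ w * sGen n i * w = sGen n j}

/-- `F_w(q) = ∑_{x ∈ W_{K_w}, w x w = x} q^{ℓ(x)}`, defined coefficientwise. -/
def Fw (n : ℕ) (w : Equiv.Perm ℤ) : PowerSeries ℤ :=
  PowerSeries.mk fun j =>
    (Nat.card {x : Equiv.Perm ℤ //
        x ∈ Subgroup.closure (Kgens n w) ∧ w * x * w = x ∧ ellA n x = j} : ℤ)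

/-- The `q`-part of the summand of `T_n(s,q)` attached to `w ∈ Ω_n`:
`q^{ℓ(w)} ((1−q)/(1+q))^{ℓ'(w)} P_n(q²) / F_w(q)`. -/
def termW (n : ℕ) (w : Equiv.Perm ℤ) : PowerSeries ℤ :=
  (PowerSeries.X : PowerSeries ℤ) ^ ellA n w *
    ((1 - PowerSeries.X) * pinv (1 + PowerSeries.X)) ^ ellAbs n w *
    sq2 (qFact n) * pinv (Fw n w)

/-- The coefficient of `s^k` in `∑_{w ∈ Ω_n} q^{ℓ(w)} (s(1−q)/(1+q))^{ℓ'(w)} P_n(q²)/F_w(q)`,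
computed coefficientwise in `q` (the sum over `w` converges coefficientwise). -/
def innerSum (n k : ℕ) : PowerSeries ℤ :=
  PowerSeries.mk fun j =>
    ∑' w : {w : Equiv.Perm ℤ // w ∈ OmegaSet n ∧ ellAbs n w = k},
      PowerSeries.coeff j (termW n w.1)

/-- The power series `T_n(s, q) ∈ ℤ[[s, q]]`, realized as an element of `(ℤ[[q]])[[s]]`:
`T_n(s,q) = (P̃_n(q)/P̃_n(q²)) ∑_{w ∈ Ω_n} q^{ℓ(w)} (s(1−q)/(1+q))^{ℓ'(w)} P_n(q²)/F_w(q)`. -/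
def Tser (n : ℕ) : PowerSeries (PowerSeries ℤ) :=
  PowerSeries.mk fun k => Ptilde n * pinv (sq2 (Ptilde n)) * innerSum n k

end

/-- `λ(w) ∈ ℤⁿ`, where `λ_i(w) = ⌊(w(i) − 1)/n⌋` for `i ∈ {1, …, n}`
(indexed here by `i : Fin n`, standing for the position `i + 1`). -/
noncomputable def lam (n : ℕ) (w : Equiv.Perm ℤ) : Fin n → ℤ :=
  fun i => Int.fdiv (w (((i : ℕ) : ℤ) + 1) - 1) (n : ℤ)

namespace St13

lemma ndvd {n : ℕ} (hn : 2 ≤ n) : ¬ (n : ℤ) ∣ 1 := by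
  intro h
  have h1 := Int.le_of_dvd one_pos h
  have h2 : (2:ℤ) ≤ (n:ℤ) := by exact_mod_cast hn
  omega

lemma sGen_apply {n i : ℕ} (hn : 2 ≤ n) (x : ℤ) : sGen n i x = sFun n i x := by
  rw [sGen, dif_neg (ndvd hn)]; rfl

lemma dvd_shift_iff {m a : ℤ} : m ∣ a + m ↔ m ∣ a := by
  constructor
  · intro h
    have h2 := dvd_sub h (dvd_refl m)
    simpa using h2
  · intro h
    exact dvd_add h (dvd_refl m)

lemma sFun_eval1 {n i : ℕ} {x : ℤ} (h : (n:ℤ) ∣ x - i) : sFun n i x = x + 1 := by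
  rw [sFun, if_pos h]

lemma sFun_eval2 {n i : ℕ} {x : ℤ} (h1 : ¬ (n:ℤ) ∣ x - i) (h2 : (n:ℤ) ∣ x - ((i:ℤ)+1)) :
    sFun n i x = x - 1 := by
  rw [sFun, if_neg h1, if_pos h2]

lemma sFun_eval3 {n i : ℕ} {x : ℤ} (h1 : ¬ (n:ℤ) ∣ x - i) (h2 : ¬ (n:ℤ) ∣ x - ((i:ℤ)+1)) :
    sFun n i x = x := by
  rw [sFun, if_neg h1, if_neg h2]

lemma sFun_add_n {n i : ℕ} (x : ℤ) : sFun n i (x + n) = sFun n i x + n := by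
  unfold sFun
  simp only [show x + (n:ℤ) - (i:ℤ) = (x - i) + n by ring,
    show x + (n:ℤ) - ((i:ℤ) + 1) = (x - ((i:ℤ)+1)) + n by ring, dvd_shift_iff]
  split_ifs <;> ring

lemma eq_zero_of_dvd_small {m a : ℤ} (h : m ∣ a) (h1 : -m < a) (h2 : a < m) : a = 0 := by
  rcases h with ⟨c, rfl⟩
  rcases lt_trichotomy c 0 with hc | hc | hc
  · nlinarith
  · simp [hc]
  · nlinarith

lemma sFun_cross {n i : ℕ} (hn : ¬ (n:ℤ) ∣ 1) {x y : ℤ} (hxy : x < y)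
    (h : ¬ sFun n i x < sFun n i y) : y = x + 1 ∧ (n:ℤ) ∣ x - i := by
  by_cases c1 : (n:ℤ) ∣ x - i
  · by_cases d1 : (n:ℤ) ∣ y - i
    · rw [sFun_eval1 c1, sFun_eval1 d1] at h; omega
    · by_cases d2 : (n:ℤ) ∣ y - ((i:ℤ)+1)
      · rw [sFun_eval1 c1, sFun_eval2 d1 d2] at h
        have hy : y = x + 1 ∨ y = x + 2 := by omega
        rcases hy with rfl | rfl
        · exact ⟨rfl, c1⟩
        · exfalso
          have h3 : (n:ℤ) ∣ (x + 2 - ((i:ℤ)+1)) - (x - i) := dvd_sub d2 c1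
          have h4 : (n:ℤ) ∣ 1 := by
            simpa [show (x + 2 - ((i:ℤ)+1)) - (x - (i:ℤ)) = 1 by ring] using h3
          exact hn h4
      · rw [sFun_eval1 c1, sFun_eval3 d1 d2] at h
        exfalso
        have hy : y = x + 1 := by omega
        subst hy
        exact d2 (by simpa [show x + 1 - ((i:ℤ)+1) = x - i by ring] using c1)
  · by_cases c2 : (n:ℤ) ∣ x - ((i:ℤ)+1)
    · exfalso
      rw [sFun_eval2 c1 c2] at h
      by_cases d1 : (n:ℤ) ∣ y - i
      · rw [sFun_eval1 d1] at h; omega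
      · by_cases d2 : (n:ℤ) ∣ y - ((i:ℤ)+1)
        · rw [sFun_eval2 d1 d2] at h
          have hy : y = x + 1 := by omega
          subst hy
          have h3 : (n:ℤ) ∣ (x + 1 - ((i:ℤ)+1)) - (x - ((i:ℤ)+1)) := dvd_sub d2 c2
          exact hn (by simpa [show (x + 1 - ((i:ℤ)+1)) - (x - ((i:ℤ)+1)) = 1 by ring] using h3)
        · rw [sFun_eval3 d1 d2] at h; omega
    · exfalso
      rw [sFun_eval3 c1 c2] at h
      by_cases d1 : (n:ℤ) ∣ y - i
      · rw [sFun_eval1 d1] at h; omega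
      · by_cases d2 : (n:ℤ) ∣ y - ((i:ℤ)+1)
        · rw [sFun_eval2 d1 d2] at h
          have hy : y = x + 1 := by omega
          subst hy
          exact c1 (by simpa [show x + 1 - ((i:ℤ)+1) = x - i by ring] using d2)
        · rw [sFun_eval3 d1 d2] at h; omega

lemma sFun_mem_Icc {n i : ℕ} {x : ℤ} (hi1 : 1 ≤ (i:ℤ)) (hi2 : (i:ℤ) ≤ (n:ℤ) - 1)
    (hx1 : 1 ≤ x) (hx2 : x ≤ n) : 1 ≤ sFun n i x ∧ sFun n i x ≤ n := by
  unfold sFun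
  split_ifs with c1 c2
  · have := eq_zero_of_dvd_small c1 (by omega) (by omega)
    omega
  · have := eq_zero_of_dvd_small c2 (by omega) (by omega)
    omega
  · omega

lemma sFun_at {n i : ℕ} (hn : ¬ (n:ℤ) ∣ 1) {x : ℤ} (h : (n:ℤ) ∣ x - i) :
    sFun n i x = x + 1 ∧ sFun n i (x + 1) = x := by
  refine ⟨sFun_eval1 h, ?_⟩
  have h1 : ¬ (n:ℤ) ∣ x + 1 - i := by
    intro h2
    exact hn (by simpa [show x + 1 - (i:ℤ) - (x - i) = 1 by ring] using dvd_sub h2 h)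
  rw [sFun_eval2 h1 (by simpa [show x + 1 - ((i:ℤ)+1) = x - i by ring] using h)]
  ring

lemma trans_mul {n : ℕ} {w : ℤ → ℤ} (hw : ∀ j, w (j + (n:ℤ)) = w j + n) :
    ∀ (k : ℤ) (j : ℤ), w (j + k * n) = w j + k * n := by
  have hw' : ∀ j, w (j - (n:ℤ)) = w j - n := by
    intro j
    have h := hw (j - n)
    rw [sub_add_cancel] at h
    omega
  intro k
  induction k using Int.induction_on with
  | zero => simp
  | succ m ih =>
    intro j
    have h1 := hw (j + m * n)
    have h2 := ih j
    rw [show j + ((m:ℤ) + 1) * n = j + m * n + n by ring, h1, h2]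
    ring
  | pred m ih =>
    intro j
    have h1 := hw' (j + (-(m:ℤ)) * n)
    have h2 := ih j
    rw [show j + (-(m:ℤ) - 1) * n = j + (-(m:ℤ)) * n - n by ring, h1, h2]
    ring

end St13

namespace St13

def InvSet (n : ℕ) (w : Equiv.Perm ℤ) : Set (ℤ × ℤ) :=
  {p : ℤ × ℤ | p.1 < p.2 ∧ 1 ≤ p.2 ∧ p.2 ≤ (n : ℤ) ∧ w p.2 < w p.1}

lemma ellA_def (n : ℕ) (w : Equiv.Perm ℤ) : ellA n w = (InvSet n w).ncard := rfl

lemma invSet_finite {n : ℕ} (hn : 2 ≤ n) (w : Equiv.Perm ℤ)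
    (htr : ∀ j, w (j + (n:ℤ)) = w j + n) : (InvSet n w).Finite := by
  have hn' : (2:ℤ) ≤ (n:ℤ) := by exact_mod_cast hn
  have hne : (Finset.Icc (1:ℤ) (n:ℤ)).Nonempty := by
    rw [Finset.nonempty_Icc]; omega
  set s := (Finset.Icc (1:ℤ) (n:ℤ)).image w with hs
  have hsne : s.Nonempty := hne.image w
  set M := s.max' hsne
  set m := s.min' hsne
  set L : ℤ := 1 + ((m - M)/(n:ℤ) + 1) * n with hL
  apply Set.Finite.subset ((Finset.Icc L (n:ℤ) ×ˢ Finset.Icc (1:ℤ) (n:ℤ)).finite_toSet)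
  rintro ⟨a, b⟩ ⟨hab, hb1, hb2, hw⟩
  dsimp only at hab hb1 hb2 hw
  simp only [Finset.coe_product, Set.mem_prod, Finset.mem_coe, Finset.mem_Icc]
  refine ⟨⟨?_, by omega⟩, by omega⟩
  -- lower bound on a
  set k := (a - 1) / (n:ℤ) with hk
  set r := a - k * n with hr
  have hmod := Int.mul_ediv_add_emod (a - 1) (n:ℤ)
  have hmn := Int.emod_nonneg (a - 1) (by omega : (n:ℤ) ≠ 0)
  have hml := Int.emod_lt_of_pos (a - 1) (by omega : (0:ℤ) < n)
  have hkk : k * (n:ℤ) = (n:ℤ) * k := mul_comm _ _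
  have hk2 : (n:ℤ) * ((a-1)/(n:ℤ)) = (n:ℤ) * k := by rw [hk]
  have hr1 : 1 ≤ r := by rw [hr]; omega
  have hr2 : r ≤ n := by rw [hr]; omega
  have hwa : w a = w r + k * n := by
    have := trans_mul (n := n) (w := fun x => w x) htr k r
    simpa [hr, sub_add_cancel] using this
  have hwrM : w r ≤ M := Finset.le_max' s _ (Finset.mem_image_of_mem w (by simp [Finset.mem_Icc]; omega))
  have hwbm : m ≤ w b := Finset.min'_le s _ (Finset.mem_image_of_mem w (by simp [Finset.mem_Icc]; omega))
  have hkn : m - M < k * n := by omega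
  have hkq : (m - M)/(n:ℤ) + 1 ≤ k := by
    by_contra hcon
    push_neg at hcon
    have h1 : k ≤ (m - M)/(n:ℤ) := by omega
    have h2 : k * n ≤ ((m - M)/(n:ℤ)) * n := by
      apply mul_le_mul_of_nonneg_right h1; omega
    have h3 := Int.mul_ediv_add_emod (m - M) (n:ℤ)
    have h4 := Int.emod_nonneg (m - M) (by omega : (n:ℤ) ≠ 0)
    have hqq : ((m - M)/(n:ℤ)) * (n:ℤ) = (n:ℤ) * ((m - M)/(n:ℤ)) := mul_comm _ _
    omega
  have hfin : ((m - M)/(n:ℤ) + 1) * n ≤ k * n := by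
    apply mul_le_mul_of_nonneg_right hkq; omega
  have hexp : ((m - M)/(n:ℤ) + 1) * (n:ℤ) = ((m - M)/(n:ℤ)) * n + n := by ring
  have hqq : ((m - M)/(n:ℤ)) * (n:ℤ) = (n:ℤ) * ((m - M)/(n:ℤ)) := mul_comm _ _
  omega

lemma sGen_mul_self {n i : ℕ} (hn : 2 ≤ n) : sGen n i * sGen n i = 1 := by
  ext x
  simp [Equiv.Perm.mul_apply, sGen_apply hn, sFun_invol n i (ndvd hn) x]

lemma mulR_apply {n i : ℕ} (hn : 2 ≤ n) (w : Equiv.Perm ℤ) (x : ℤ) :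
    (w * sGen n i) x = w (sFun n i x) := by
  simp [Equiv.Perm.mul_apply, sGen_apply hn]

lemma mulL_apply {n i : ℕ} (hn : 2 ≤ n) (w : Equiv.Perm ℤ) (x : ℤ) :
    (sGen n i * w) x = sFun n i (w x) := by
  simp [Equiv.Perm.mul_apply, sGen_apply hn]

lemma htr_mulR {n i : ℕ} (hn : 2 ≤ n) {w : Equiv.Perm ℤ}
    (htr : ∀ j, w (j + (n:ℤ)) = w j + n) :
    ∀ j, (w * sGen n i) (j + (n:ℤ)) = (w * sGen n i) j + n := by
  intro j
  rw [mulR_apply hn, mulR_apply hn, sFun_add_n, htr]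

lemma htr_mulL {n i : ℕ} (hn : 2 ≤ n) {w : Equiv.Perm ℤ}
    (htr : ∀ j, w (j + (n:ℤ)) = w j + n) :
    ∀ j, (sGen n i * w) (j + (n:ℤ)) = (sGen n i * w) j + n := by
  intro j
  rw [mulL_apply hn, mulL_apply hn, htr, sFun_add_n]

/-- the key mapping property of `e p = (sFun p.1, sFun p.2)` off the special pair -/
lemma right_map {n i : ℕ} (hn : 2 ≤ n) (hi1 : 1 ≤ (i:ℤ)) (hi2 : (i:ℤ) ≤ (n:ℤ) - 1)
    (w : Equiv.Perm ℤ) {p : ℤ × ℤ}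
    (hp : p ∈ InvSet n (w * sGen n i) \ {((i:ℤ), (i:ℤ)+1)}) :
    sFun n i p.1 < sFun n i p.2 ∧
      (sFun n i p.1, sFun n i p.2) ∈ InvSet n w \ {((i:ℤ), (i:ℤ)+1)} := by
  obtain ⟨⟨hab, hb1, hb2, hw⟩, hne⟩ := hp
  obtain ⟨a, b⟩ := p
  simp only at hab hb1 hb2 hw hne ⊢
  have hne' : ¬ (a = (i:ℤ) ∧ b = (i:ℤ)+1) := by
    intro ⟨h1, h2⟩; exact hne (by simp [Prod.ext_iff, h1, h2])
  have hord : sFun n i a < sFun n i b := by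
    by_contra hcon
    obtain ⟨hba, hdvd⟩ := sFun_cross (ndvd hn) hab hcon
    have : a - (i:ℤ) = 0 := eq_zero_of_dvd_small hdvd (by omega) (by omega)
    exact hne' ⟨by omega, by omega⟩
  rw [mulR_apply hn, mulR_apply hn] at hw
  refine ⟨hord, ⟨hord, (sFun_mem_Icc hi1 hi2 hb1 hb2).1, (sFun_mem_Icc hi1 hi2 hb1 hb2).2, hw⟩, ?_⟩
  intro hcon
  rw [Set.mem_singleton_iff, Prod.ext_iff] at hcon
  obtain ⟨h1, h2⟩ := hcon
  simp only at h1 h2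
  have hii : (n:ℤ) ∣ (i:ℤ) - (i:ℤ) := by simp
  obtain ⟨e1, e2⟩ := sFun_at (ndvd hn) hii
  have ha : a = (i:ℤ) + 1 := by
    rw [← sFun_invol n i (ndvd hn) a, h1, e1]
  have hb : b = (i:ℤ) := by
    rw [← sFun_invol n i (ndvd hn) b, h2, e2]
  omega

/-- right multiplication increases length by one when `w i < w (i+1)` -/
lemma right_incr {n i : ℕ} (hn : 2 ≤ n) (hi1 : 1 ≤ (i:ℤ)) (hi2 : (i:ℤ) ≤ (n:ℤ) - 1)
    (w : Equiv.Perm ℤ) (htr : ∀ j, w (j + (n:ℤ)) = w j + n)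
    (hlt : w (i:ℤ) < w ((i:ℤ)+1)) :
    ellA n (w * sGen n i) = ellA n w + 1 := by
  set p₀ : ℤ × ℤ := ((i:ℤ), (i:ℤ)+1) with hp₀
  set S₁ := InvSet n (w * sGen n i) with hS₁
  set S₂ := InvSet n w with hS₂
  have hii : (n:ℤ) ∣ (i:ℤ) - (i:ℤ) := by simp
  obtain ⟨e1, e2⟩ := sFun_at (ndvd hn) hii
  have hmem1 : p₀ ∈ S₁ := by
    rw [hp₀]
    refine ⟨by dsimp only; omega, by dsimp only; omega, by dsimp only; omega, ?_⟩
    dsimp only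
    rw [mulR_apply hn, mulR_apply hn, e1, e2]
    exact hlt
  have hmem2 : p₀ ∉ S₂ := by
    rintro ⟨-, -, -, hcon⟩
    simp only [hp₀] at hcon
    omega
  have hSS : w * sGen n i * sGen n i = w := by
    rw [mul_assoc, sGen_mul_self hn, mul_one]
  have himg : (fun p : ℤ × ℤ => (sFun n i p.1, sFun n i p.2)) '' (S₁ \ {p₀}) = S₂ \ {p₀} := by
    apply Set.Subset.antisymm
    · rintro q ⟨p, hp, rfl⟩
      exact (right_map hn hi1 hi2 w hp).2
    · intro q hq
      have hq' : q ∈ InvSet n ((w * sGen n i) * sGen n i) \ {p₀} := by rwa [hSS]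
      have h2 := right_map hn hi1 hi2 (w * sGen n i) hq'
      refine ⟨(sFun n i q.1, sFun n i q.2), h2.2, ?_⟩
      have hq1 := sFun_invol n i (ndvd hn) q.1
      have hq2 := sFun_invol n i (ndvd hn) q.2
      show (sFun n i (sFun n i q.1), sFun n i (sFun n i q.2)) = q
      rw [hq1, hq2]
  have hinj : Set.InjOn (fun p : ℤ × ℤ => (sFun n i p.1, sFun n i p.2)) (S₁ \ {p₀}) := by
    intro p hp q hq hpq
    dsimp only at hpq
    rw [Prod.ext_iff] at hpq
    obtain ⟨h1, h2⟩ := hpq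
    rw [Prod.ext_iff]
    exact ⟨(sFun_invol n i (ndvd hn)).injective h1, (sFun_invol n i (ndvd hn)).injective h2⟩
  have hfin1 : S₁.Finite := invSet_finite hn _ (htr_mulR hn htr)
  have hcard : (S₁ \ {p₀}).ncard = (S₂ \ {p₀}).ncard := by
    rw [← himg, Set.ncard_image_of_injOn hinj]
  have h3 : (S₁ \ {p₀}).ncard + 1 = S₁.ncard :=
    Set.ncard_diff_singleton_add_one hmem1 hfin1
  rw [ellA_def, ellA_def, ← hS₁, ← hS₂, ← h3, hcard, Set.diff_singleton_eq_self hmem2]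

/-- right multiplication decreases length by one when `w (i+1) < w i` -/
lemma right_decr {n i : ℕ} (hn : 2 ≤ n) (hi1 : 1 ≤ (i:ℤ)) (hi2 : (i:ℤ) ≤ (n:ℤ) - 1)
    (w : Equiv.Perm ℤ) (htr : ∀ j, w (j + (n:ℤ)) = w j + n)
    (hlt : w ((i:ℤ)+1) < w (i:ℤ)) :
    ellA n w = ellA n (w * sGen n i) + 1 := by
  have hii : (n:ℤ) ∣ (i:ℤ) - (i:ℤ) := by simp
  obtain ⟨e1, e2⟩ := sFun_at (ndvd hn) hii
  have h := right_incr hn hi1 hi2 (w * sGen n i) (htr_mulR hn htr) ?_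
  · rwa [mul_assoc, sGen_mul_self hn, mul_one] at h
  · rw [mulR_apply hn, mulR_apply hn, e1, e2]
    exact hlt

end St13

namespace St13

lemma left_incr {n i : ℕ} (hn : 2 ≤ n) (hi1 : 1 ≤ (i:ℤ)) (hi2 : (i:ℤ) ≤ (n:ℤ) - 1)
    (w : Equiv.Perm ℤ) (htr : ∀ j, w (j + (n:ℤ)) = w j + n)
    {u v : ℤ} (hwu : w u = (i:ℤ)) (hwv : w v = (i:ℤ) + 1) (huv : u < v) :
    ellA n (sGen n i * w) = ellA n w + 1 := by
  have hn' : (2:ℤ) ≤ (n:ℤ) := by exact_mod_cast hn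
  have htr' : ∀ (k j : ℤ), w (j + k * n) = w j + k * n := trans_mul htr
  set k₀ : ℤ := ((n:ℤ) - v) / (n:ℤ) with hk₀
  have hdiv := Int.mul_ediv_add_emod ((n:ℤ) - v) (n:ℤ)
  have hdm := Int.emod_nonneg ((n:ℤ) - v) (by omega : (n:ℤ) ≠ 0)
  have hdl := Int.emod_lt_of_pos ((n:ℤ) - v) (by omega : (0:ℤ) < n)
  have hcomm : (n:ℤ) * (((n:ℤ) - v) / (n:ℤ)) = k₀ * n := by rw [hk₀]; ring
  have hb1 : 1 ≤ v + k₀ * n := by omega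
  have hb2 : v + k₀ * n ≤ n := by omega
  set P : ℤ × ℤ := (u + k₀ * n, v + k₀ * n) with hP
  have hval_u : w (u + k₀ * n) = (i:ℤ) + k₀ * n := by rw [htr' k₀ u, hwu]
  have hval_v : w (v + k₀ * n) = (i:ℤ) + k₀ * n + 1 := by rw [htr' k₀ v, hwv]; ring
  have hdvd : (n:ℤ) ∣ ((i:ℤ) + k₀ * n) - (i:ℤ) := ⟨k₀, by ring⟩
  obtain ⟨f1, f2⟩ := sFun_at (ndvd hn) hdvd
  set S₁ := InvSet n (sGen n i * w) with hS₁
  set S₂ := InvSet n w with hS₂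
  have hmem1 : P ∈ S₁ := by
    rw [hP]
    refine ⟨by dsimp only; omega, by dsimp only; omega, by dsimp only; omega, ?_⟩
    dsimp only
    rw [mulL_apply hn, mulL_apply hn, hval_u, hval_v, f1, f2]
    omega
  have hmem2 : P ∉ S₂ := by
    rintro ⟨-, -, -, hcon⟩
    rw [hP] at hcon
    dsimp only at hcon
    rw [hval_u, hval_v] at hcon
    omega
  have hdiff : S₁ \ {P} = S₂ \ {P} := by
    ext p
    obtain ⟨a, b⟩ := p
    simp only [Set.mem_diff, Set.mem_singleton_iff]
    constructor
    · rintro ⟨⟨hab, h1, h2, hord⟩, hne⟩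
      dsimp only at hab h1 h2 hord
      refine ⟨⟨hab, h1, h2, ?_⟩, hne⟩
      dsimp only
      rw [mulL_apply hn, mulL_apply hn] at hord
      by_contra hcon
      push_neg at hcon
      have hne2 : w a ≠ w b := fun h => by have := w.injective h; omega
      have hlt2 : w a < w b := lt_of_le_of_ne hcon hne2
      obtain ⟨hba, c, hc⟩ := sFun_cross (n := n) (i := i) (ndvd hn) hlt2 (by omega)
      have hcc : (n:ℤ) * c = c * n := mul_comm _ _
      have hau : a = u + c * n := by
        apply w.injective; rw [htr' c u, hwu]; omega
      have hbv : b = v + c * n := by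
        apply w.injective; rw [htr' c v, hwv]; omega
      have hd2 : (n:ℤ) ∣ (c - k₀) * n := ⟨c - k₀, by ring⟩
      have hexp : (c - k₀) * (n:ℤ) = (v + c * n) - (v + k₀ * n) := by ring
      have hz := eq_zero_of_dvd_small hd2 (by omega) (by omega)
      exact hne (by rw [hP, Prod.ext_iff]; constructor <;> dsimp only <;> omega)
    · rintro ⟨⟨hab, h1, h2, hord⟩, hne⟩
      dsimp only at hab h1 h2 hord
      refine ⟨⟨hab, h1, h2, ?_⟩, hne⟩
      dsimp only
      rw [mulL_apply hn, mulL_apply hn]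
      by_contra hcon
      obtain ⟨hba, c, hc⟩ := sFun_cross (ndvd hn) hord hcon
      have hcc : (n:ℤ) * c = c * n := mul_comm _ _
      have hbu : b = u + c * n := by
        apply w.injective; rw [htr' c u, hwu]; omega
      have hav : a = v + c * n := by
        apply w.injective; rw [htr' c v, hwv]; omega
      omega
  have hfin1 : S₁.Finite := invSet_finite hn _ (htr_mulL hn htr)
  have h3 : (S₁ \ {P}).ncard + 1 = S₁.ncard :=
    Set.ncard_diff_singleton_add_one hmem1 hfin1
  rw [ellA_def, ellA_def, ← hS₁, ← hS₂, ← h3, hdiff, Set.diff_singleton_eq_self hmem2]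

end St13

namespace St13

def IncrOn (n : ℕ) (w : Equiv.Perm ℤ) : Prop :=
  ∀ x y : ℤ, 1 ≤ x → x < y → y ≤ (n:ℤ) → w x < w y

lemma incrOn_of_adj {n : ℕ} {w : Equiv.Perm ℤ}
    (h : ∀ x : ℤ, 1 ≤ x → x ≤ (n:ℤ) - 1 → w x < w (x+1)) : IncrOn n w := by
  intro x y hx hxy hy
  have key : ∀ m : ℕ, 1 ≤ x → x + (m:ℤ) + 1 ≤ (n:ℤ) → w x < w (x + (m:ℤ) + 1) := by
    intro m
    induction m with
    | zero =>
      intro h1 h2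
      have := h x h1 (by push_cast at h2; omega)
      simpa using this
    | succ m ih =>
      intro h1 h2
      push_cast at h2
      have h3 := ih h1 (by push_cast; omega)
      have h4 := h (x + (m:ℤ) + 1) (by omega) (by omega)
      have h5 : x + ((m:ℕ)+1:ℤ) + 1 = (x + (m:ℤ) + 1) + 1 := by push_cast; ring
      push_cast
      rw [show x + ((m:ℤ)+1) + 1 = (x + (m:ℤ) + 1) + 1 by ring]
      exact h3.trans h4
  have hm : y = x + (((y - x - 1).toNat : ℕ) : ℤ) + 1 := by omega
  rw [hm]
  exact key _ hx (by omega)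

lemma mul_self_apply {w : Equiv.Perm ℤ} (hinv : w * w = 1) (x : ℤ) : w (w x) = x := by
  have := Equiv.ext_iff.mp hinv x
  simpa [Equiv.Perm.mul_apply] using this

lemma omega_mem_iff {n : ℕ} (hn : 2 ≤ n) (w : Equiv.Perm ℤ) :
    w ∈ OmegaSet n ↔ IsAffinePerm n w ∧ w * w = 1 ∧ IncrOn n w := by
  have hn' : (2:ℤ) ≤ (n:ℤ) := by exact_mod_cast hn
  constructor
  · rintro ⟨haff, hinv, hlen⟩
    refine ⟨haff, hinv, incrOn_of_adj ?_⟩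
    intro x hx1 hx2
    obtain ⟨i, rfl⟩ : ∃ i : ℕ, x = (i:ℤ) := ⟨x.toNat, by omega⟩
    have hi1 : 1 ≤ i := by omega
    have hi2 : i ≤ n - 1 := by omega
    by_contra hcon
    push_neg at hcon
    have hne : w ((i:ℤ)+1) ≠ w (i:ℤ) := fun h => by have := w.injective h; omega
    have hlt : w ((i:ℤ)+1) < w (i:ℤ) := lt_of_le_of_ne hcon hne
    have hdecr := right_decr hn (by omega) (by omega) w haff.1 hlt
    have := (hlen i hi1 hi2).2
    rw [hdecr] at this
    omega
  · rintro ⟨haff, hinv, hincr⟩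
    refine ⟨haff, hinv, ?_⟩
    intro i hi1 hi2
    have hiz1 : 1 ≤ (i:ℤ) := by exact_mod_cast hi1
    have hiz2 : (i:ℤ) ≤ (n:ℤ) - 1 := by
      have : i + 1 ≤ n := by omega
      push_cast at this ⊢
      omega
    have hadj : w (i:ℤ) < w ((i:ℤ)+1) := hincr i (i+1) (by omega) (by omega) (by omega)
    constructor
    · exact left_incr hn hiz1 hiz2 w haff.1 (mul_self_apply hinv (i:ℤ))
        (mul_self_apply hinv ((i:ℤ)+1)) hadj
    · exact right_incr hn hiz1 hiz2 w haff.1 hadj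

end St13

namespace St13

noncomputable def Blk (n : ℕ) (b : ℤ → ℤ) (c : ℤ) : Finset ℤ :=
  (Finset.Icc (1:ℤ) (n:ℤ)).filter (fun j => b j = c)

noncomputable def mnB (n : ℕ) (b : ℤ → ℤ) (c : ℤ) : ℤ :=
  if h : (Blk n b c).Nonempty then (Blk n b c).min' h else 0

noncomputable def mxB (n : ℕ) (b : ℤ → ℤ) (c : ℤ) : ℤ :=
  if h : (Blk n b c).Nonempty then (Blk n b c).max' h else 0

noncomputable def rhoF (n : ℕ) (b : ℤ → ℤ) (c : ℤ) (r : ℤ) : ℤ :=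
  (n:ℤ) + 1 - mnB n b c - mxB n b c + r

lemma mem_blk {n : ℕ} {b : ℤ → ℤ} {c : ℤ} {x : ℤ} :
    x ∈ Blk n b c ↔ (1 ≤ x ∧ x ≤ (n:ℤ) ∧ b x = c) := by
  simp [Blk, Finset.mem_filter, Finset.mem_Icc, and_assoc]

lemma blk_ne {n : ℕ} {b : ℤ → ℤ} {j : ℤ} (hj1 : 1 ≤ j) (hj2 : j ≤ (n:ℤ)) :
    (Blk n b (b j)).Nonempty :=
  ⟨j, mem_blk.mpr ⟨hj1, hj2, rfl⟩⟩

lemma mnB_spec {n : ℕ} {b : ℤ → ℤ} {c : ℤ} (hne : (Blk n b c).Nonempty) :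
    mnB n b c ∈ Blk n b c ∧ ∀ y ∈ Blk n b c, mnB n b c ≤ y := by
  rw [mnB, dif_pos hne]
  exact ⟨Finset.min'_mem _ hne, fun y hy => Finset.min'_le _ y hy⟩

lemma mxB_spec {n : ℕ} {b : ℤ → ℤ} {c : ℤ} (hne : (Blk n b c).Nonempty) :
    mxB n b c ∈ Blk n b c ∧ ∀ y ∈ Blk n b c, y ≤ mxB n b c := by
  rw [mxB, dif_pos hne]
  exact ⟨Finset.max'_mem _ hne, fun y hy => Finset.le_max' _ y hy⟩

lemma blk_basic {n : ℕ} {b : ℤ → ℤ} {j : ℤ} (hj1 : 1 ≤ j) (hj2 : j ≤ (n:ℤ)) :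
    1 ≤ mnB n b (b j) ∧ mnB n b (b j) ≤ j ∧ j ≤ mxB n b (b j) ∧ mxB n b (b j) ≤ (n:ℤ)
      ∧ b (mnB n b (b j)) = b j ∧ b (mxB n b (b j)) = b j := by
  have hne := blk_ne (b := b) hj1 hj2
  obtain ⟨hmn, hmin⟩ := mnB_spec hne
  obtain ⟨hmx, hmax⟩ := mxB_spec hne
  have h1 := mem_blk.mp hmn
  have h2 := mem_blk.mp hmx
  exact ⟨h1.1, hmin j (mem_blk.mpr ⟨hj1, hj2, rfl⟩), hmax j (mem_blk.mpr ⟨hj1, hj2, rfl⟩),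
    h2.2.1, h1.2.2, h2.2.2⟩

section PropsB

variable {n : ℕ} {b : ℤ → ℤ}

lemma blk_interval (hmono : ∀ x y, 1 ≤ x → x ≤ y → y ≤ (n:ℤ) → b x ≤ b y)
    {j : ℤ} (hj1 : 1 ≤ j) (hj2 : j ≤ (n:ℤ)) {x : ℤ}
    (h1 : mnB n b (b j) ≤ x) (h2 : x ≤ mxB n b (b j)) : b x = b j := by
  obtain ⟨b1, b2, b3, b4, b5, b6⟩ := blk_basic (b := b) hj1 hj2
  have hle : b x ≤ b j := by
    have := hmono x (mxB n b (b j)) (by omega) h2 b4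
    omega
  have hge : b j ≤ b x := by
    have := hmono (mnB n b (b j)) x b1 h1 (by omega)
    omega
  omega

lemma blk_interval_neg (hmono : ∀ x y, 1 ≤ x → x ≤ y → y ≤ (n:ℤ) → b x ≤ b y)
    (hanti : ∀ x, 1 ≤ x → x ≤ (n:ℤ) → b ((n:ℤ) + 1 - x) = - b x)
    {j : ℤ} (hj1 : 1 ≤ j) (hj2 : j ≤ (n:ℤ)) {x : ℤ}
    (h1 : (n:ℤ) + 1 - mxB n b (b j) ≤ x) (h2 : x ≤ (n:ℤ) + 1 - mnB n b (b j)) :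
    b x = -(b j) := by
  obtain ⟨b1, b2, b3, b4, b5, b6⟩ := blk_basic (b := b) hj1 hj2
  have hy1 : 1 ≤ (n:ℤ) + 1 - x := by omega
  have hy2 : (n:ℤ) + 1 - x ≤ (n:ℤ) := by omega
  have hby : b ((n:ℤ) + 1 - x) = b j :=
    blk_interval hmono hj1 hj2 (by omega) (by omega)
  have := hanti ((n:ℤ) + 1 - x) hy1 hy2
  rw [show (n:ℤ) + 1 - ((n:ℤ) + 1 - x) = x by ring] at this
  omega

lemma mnB_mxB_neg (hanti : ∀ x, 1 ≤ x → x ≤ (n:ℤ) → b ((n:ℤ) + 1 - x) = - b x)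
    {j : ℤ} (hj1 : 1 ≤ j) (hj2 : j ≤ (n:ℤ)) :
    mnB n b (-(b j)) = (n:ℤ) + 1 - mxB n b (b j) ∧
      mxB n b (-(b j)) = (n:ℤ) + 1 - mnB n b (b j) := by
  obtain ⟨b1, b2, b3, b4, b5, b6⟩ := blk_basic (b := b) hj1 hj2
  have hrefl : ∀ y, y ∈ Blk n b (b j) → (n:ℤ) + 1 - y ∈ Blk n b (-(b j)) := by
    intro y hy
    obtain ⟨hy1, hy2, hy3⟩ := mem_blk.mp hy
    exact mem_blk.mpr ⟨by omega, by omega, by rw [hanti y hy1 hy2, hy3]⟩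
  have hrefl' : ∀ y, y ∈ Blk n b (-(b j)) → (n:ℤ) + 1 - y ∈ Blk n b (b j) := by
    intro y hy
    obtain ⟨hy1, hy2, hy3⟩ := mem_blk.mp hy
    refine mem_blk.mpr ⟨by omega, by omega, ?_⟩
    rw [hanti y hy1 hy2, hy3]
    ring
  have hne' : (Blk n b (-(b j))).Nonempty :=
    ⟨(n:ℤ) + 1 - j, hrefl j (mem_blk.mpr ⟨hj1, hj2, rfl⟩)⟩
  obtain ⟨hmn', hmin'⟩ := mnB_spec hne'
  obtain ⟨hmx', hmax'⟩ := mxB_spec hne'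
  have hne := blk_ne (b := b) hj1 hj2
  obtain ⟨hmn, hmin⟩ := mnB_spec hne
  obtain ⟨hmx, hmax⟩ := mxB_spec hne
  constructor
  · apply le_antisymm
    · exact hmin' _ (hrefl _ hmx)
    · have h1 : (n:ℤ) + 1 - mnB n b (-(b j)) ≤ mxB n b (b j) := hmax _ (hrefl' _ hmn')
      omega
  · apply le_antisymm
    · have h1 : mnB n b (b j) ≤ (n:ℤ) + 1 - mxB n b (-(b j)) := hmin _ (hrefl' _ hmx')
      omega
    · exact hmax' _ (hrefl _ hmn)

lemma rho_bnd {j : ℤ} (hj1 : 1 ≤ j) (hj2 : j ≤ (n:ℤ)) :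
    (n:ℤ) + 1 - mxB n b (b j) ≤ rhoF n b (b j) j ∧
      rhoF n b (b j) j ≤ (n:ℤ) + 1 - mnB n b (b j) ∧
      1 ≤ rhoF n b (b j) j ∧ rhoF n b (b j) j ≤ (n:ℤ) := by
  obtain ⟨b1, b2, b3, b4, b5, b6⟩ := blk_basic (b := b) hj1 hj2
  rw [rhoF]
  refine ⟨by omega, by omega, by omega, by omega⟩

lemma rho_val (hmono : ∀ x y, 1 ≤ x → x ≤ y → y ≤ (n:ℤ) → b x ≤ b y)
    (hanti : ∀ x, 1 ≤ x → x ≤ (n:ℤ) → b ((n:ℤ) + 1 - x) = - b x)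
    {j : ℤ} (hj1 : 1 ≤ j) (hj2 : j ≤ (n:ℤ)) :
    b (rhoF n b (b j) j) = -(b j) := by
  obtain ⟨r1, r2, r3, r4⟩ := rho_bnd (b := b) hj1 hj2
  exact blk_interval_neg hmono hanti hj1 hj2 r1 r2

lemma rho_rho (hanti : ∀ x, 1 ≤ x → x ≤ (n:ℤ) → b ((n:ℤ) + 1 - x) = - b x)
    {j : ℤ} (hj1 : 1 ≤ j) (hj2 : j ≤ (n:ℤ)) :
    rhoF n b (-(b j)) (rhoF n b (b j) j) = j := by
  obtain ⟨h1, h2⟩ := mnB_mxB_neg hanti hj1 hj2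
  rw [rhoF, rhoF, h1, h2]
  ring

end PropsB

end St13

namespace St13

def aZ (n : ℕ) (a : Fin n → ℤ) (j : ℤ) : ℤ :=
  if h : 0 < n then a ⟨((j - 1) % (n:ℤ)).toNat % n, Nat.mod_lt _ h⟩ else 0

lemma emod_toNat_lt {n : ℕ} (hn : 0 < n) (j : ℤ) : ((j - 1) % (n:ℤ)).toNat < n := by
  have hne : (n:ℤ) ≠ 0 := by exact_mod_cast hn.ne'
  have h1 := Int.emod_nonneg (j-1) hne
  have h2 := Int.emod_lt_of_pos (j-1) (by exact_mod_cast hn : (0:ℤ) < n)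
  omega

lemma aZ_def' {n : ℕ} (hn : 0 < n) (a : Fin n → ℤ) (j : ℤ) :
    aZ n a j = a ⟨((j - 1) % (n:ℤ)).toNat, emod_toNat_lt hn j⟩ := by
  rw [aZ, dif_pos hn]
  congr 1
  exact Fin.ext (Nat.mod_eq_of_lt (emod_toNat_lt hn j))

lemma aZ_period {n : ℕ} (a : Fin n → ℤ) (j : ℤ) : aZ n a (j + n) = aZ n a j := by
  by_cases hn : 0 < n
  · rw [aZ_def' hn, aZ_def' hn]
    congr 2
    rw [show j + (n:ℤ) - 1 = (j - 1) + (n:ℤ)*1 by ring, Int.add_mul_emod_self_left]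
  · rw [aZ, aZ, dif_neg hn, dif_neg hn]

lemma aZ_of_Icc {n : ℕ} (hn : 0 < n) (a : Fin n → ℤ) {j : ℤ} (h1 : 1 ≤ j) (h2 : j ≤ (n:ℤ)) :
    aZ n a j = a ⟨(j-1).toNat, by omega⟩ := by
  rw [aZ_def' hn]
  congr 1
  apply Fin.ext
  simp only
  rw [Int.emod_eq_of_lt (by omega) (by omega)]

lemma aZ_fin {n : ℕ} (hn : 0 < n) (a : Fin n → ℤ) (i : Fin n) :
    aZ n a (((i:ℕ):ℤ) + 1) = a i := by
  rw [aZ_of_Icc hn a (by omega) (by exact_mod_cast Nat.succ_le_of_lt i.isLt)]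
  congr 1
  apply Fin.ext
  simp

/-- the residue in `[1,n]` -/
def resZ (n : ℕ) (j : ℤ) : ℤ := j - (n:ℤ) * ((j-1) / (n:ℤ))

lemma res_spec {n : ℕ} (hn : 0 < n) (j : ℤ) :
    1 ≤ resZ n j ∧ resZ n j ≤ (n:ℤ) ∧ j = (n:ℤ) * ((j-1)/(n:ℤ)) + resZ n j := by
  have hne : (n:ℤ) ≠ 0 := by exact_mod_cast hn.ne'
  have h1 := Int.mul_ediv_add_emod (j-1) (n:ℤ)
  have h2 := Int.emod_nonneg (j-1) hne
  have h3 := Int.emod_lt_of_pos (j-1) (by exact_mod_cast hn : (0:ℤ) < n)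
  refine ⟨by rw [resZ]; omega, by rw [resZ]; omega, by rw [resZ]; ring⟩

lemma q_of_decomp {n : ℕ} (hn : 0 < n) {x r q : ℤ} (hr1 : 1 ≤ r) (hr2 : r ≤ (n:ℤ))
    (hx : x = (n:ℤ) * q + r) : (x - 1)/(n:ℤ) = q ∧ resZ n x = r := by
  have hne : (n:ℤ) ≠ 0 := by exact_mod_cast hn.ne'
  have h1 : x - 1 = (r - 1) + (n:ℤ) * q := by omega
  have h2 : (x - 1) / (n:ℤ) = (r-1)/(n:ℤ) + q := by rw [h1, Int.add_mul_ediv_left _ _ hne]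
  have h3 : (r-1)/(n:ℤ) = 0 := Int.ediv_eq_zero_of_lt (by omega) (by omega)
  have hq : (x - 1)/(n:ℤ) = q := by omega
  exact ⟨hq, by rw [resZ, hq]; omega⟩

lemma per_mul {n : ℕ} {b : ℤ → ℤ} (hper : ∀ j, b (j + (n:ℤ)) = b j) :
    ∀ (k : ℤ) (j : ℤ), b (j + k * n) = b j := by
  have hper' : ∀ j, b (j - (n:ℤ)) = b j := by
    intro j
    have h := hper (j - n)
    rw [sub_add_cancel] at h
    omega
  intro k
  induction k using Int.induction_on with
  | zero => simp
  | succ m ih =>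
    intro j
    have h1 := hper (j + m * n)
    have h2 := ih j
    rw [show j + ((m:ℤ) + 1) * n = j + m * n + n by ring, h1, h2]
  | pred m ih =>
    intro j
    have h1 := hper' (j + (-(m:ℤ)) * n)
    have h2 := ih j
    rw [show j + (-(m:ℤ) - 1) * n = j + (-(m:ℤ)) * n - n by ring, h1, h2]

lemma b_res {n : ℕ} (hn : 0 < n) {b : ℤ → ℤ} (hper : ∀ j, b (j + (n:ℤ)) = b j) (j : ℤ) :
    b (resZ n j) = b j := by
  have h := per_mul hper ((j-1)/(n:ℤ)) (resZ n j)
  rw [show resZ n j + ((j-1)/(n:ℤ)) * n = j by rw [resZ]; ring] at h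
  exact h.symm

/-- the constructed affine involution, as a function -/
noncomputable def Ffun (n : ℕ) (b : ℤ → ℤ) (j : ℤ) : ℤ :=
  (n:ℤ) * ((j-1) / (n:ℤ)) + (n:ℤ) * b j + rhoF n b (b (resZ n j)) (resZ n j)

section FfunProps

variable {n : ℕ} {b : ℤ → ℤ}

lemma Ffun_add_n (hn : 0 < n) (hper : ∀ j, b (j + (n:ℤ)) = b j) (j : ℤ) :
    Ffun n b (j + n) = Ffun n b j + n := by
  have hne : (n:ℤ) ≠ 0 := by exact_mod_cast hn.ne'
  have hq : (j + (n:ℤ) - 1) / (n:ℤ) = (j - 1)/(n:ℤ) + 1 := by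
    rw [show j + (n:ℤ) - 1 = (j - 1) + (n:ℤ)*1 by ring, Int.add_mul_ediv_left _ _ hne]
  have hres : resZ n (j + n) = resZ n j := by
    rw [resZ, resZ, hq]; ring
  rw [Ffun, Ffun, hq, hres, hper j]
  ring

lemma Ffun_Icc (hn : 0 < n) {j : ℤ} (h1 : 1 ≤ j) (h2 : j ≤ (n:ℤ)) :
    Ffun n b j = (n:ℤ) * b j + rhoF n b (b j) j := by
  have hq : (j - 1)/(n:ℤ) = 0 := Int.ediv_eq_zero_of_lt (by omega) (by omega)
  have hres : resZ n j = j := by rw [resZ, hq]; ring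
  rw [Ffun, hq, hres]
  ring

lemma Ffun_invol (hn : 0 < n) (hper : ∀ j, b (j + (n:ℤ)) = b j)
    (hmono : ∀ x y, 1 ≤ x → x ≤ y → y ≤ (n:ℤ) → b x ≤ b y)
    (hanti : ∀ x, 1 ≤ x → x ≤ (n:ℤ) → b ((n:ℤ) + 1 - x) = - b x) :
    Function.Involutive (Ffun n b) := by
  intro j
  obtain ⟨hr1, hr2, hdecomp⟩ := res_spec hn j
  set r := resZ n j with hrdef
  set q := (j - 1)/(n:ℤ) with hqdef
  have hbr : b r = b j := b_res hn hper j
  obtain ⟨p1, p2, p3, p4⟩ := rho_bnd (b := b) hr1 hr2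
  have hF : Ffun n b j = (n:ℤ) * (q + b r) + rhoF n b (b r) r := by
    rw [Ffun, ← hrdef, ← hqdef, hbr]; ring
  obtain ⟨hq2, hres2⟩ := q_of_decomp hn p3 p4 hF
  have hval : b (rhoF n b (b r) r) = -(b r) := rho_val hmono hanti hr1 hr2
  have hbF : b (Ffun n b j) = -(b r) := by
    rw [← b_res hn hper (Ffun n b j), hres2]
    exact hval
  rw [Ffun, hq2, hres2, hbF, hval, rho_rho hanti hr1 hr2]
  ring_nf
  omega

lemma Ffun_incr (hn : 0 < n)
    (hmono : ∀ x y, 1 ≤ x → x ≤ y → y ≤ (n:ℤ) → b x ≤ b y)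
    {x : ℤ} (h1 : 1 ≤ x) (h2 : x ≤ (n:ℤ) - 1) :
    Ffun n b x < Ffun n b (x+1) := by
  have hc : b x ≤ b (x+1) := hmono x (x+1) h1 (by omega) (by omega)
  obtain ⟨q1, q2, q3, q4⟩ := rho_bnd (n := n) (b := b) (j := x) h1 (by omega)
  obtain ⟨s1, s2, s3, s4⟩ := rho_bnd (n := n) (b := b) (j := x+1) (by omega) (by omega)
  rw [Ffun_Icc (n := n) (b := b) hn h1 (by omega), Ffun_Icc (n := n) (b := b) (j := x + 1) hn (by omega) (by omega)]
  rcases eq_or_lt_of_le hc with heq | hlt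
  · rw [← heq]
    rw [rhoF, rhoF]
    omega
  · have hnn : (n:ℤ) * 1 ≤ (n:ℤ) * (b (x+1) - b x) :=
      mul_le_mul_of_nonneg_left (by omega) (by omega)
    have hexp : (n:ℤ) * (b (x+1) - b x) = (n:ℤ) * b (x+1) - (n:ℤ) * b x := by ring
    omega

lemma Ffun_sum (hn : 0 < n)
    (hmono : ∀ x y, 1 ≤ x → x ≤ y → y ≤ (n:ℤ) → b x ≤ b y)
    (hanti : ∀ x, 1 ≤ x → x ≤ (n:ℤ) → b ((n:ℤ) + 1 - x) = - b x) :
    ∑ j ∈ Finset.Icc (1:ℤ) (n:ℤ), Ffun n b j = ∑ j ∈ Finset.Icc (1:ℤ) (n:ℤ), j := by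
  have hstep : ∑ j ∈ Finset.Icc (1:ℤ) (n:ℤ), Ffun n b j =
      ∑ j ∈ Finset.Icc (1:ℤ) (n:ℤ), ((n:ℤ) * b j + rhoF n b (b j) j) := by
    apply Finset.sum_congr rfl
    intro j hj
    rw [Finset.mem_Icc] at hj
    exact Ffun_Icc hn hj.1 hj.2
  rw [hstep, Finset.sum_add_distrib]
  have hb0 : ∑ j ∈ Finset.Icc (1:ℤ) (n:ℤ), b j = 0 := by
    have hswap : ∑ j ∈ Finset.Icc (1:ℤ) (n:ℤ), b j =
        ∑ j ∈ Finset.Icc (1:ℤ) (n:ℤ), b ((n:ℤ) + 1 - j) := by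
      apply Finset.sum_bij' (fun j _ => (n:ℤ) + 1 - j) (fun j _ => (n:ℤ) + 1 - j)
      · intro j hj; rw [Finset.mem_Icc] at hj ⊢; omega
      · intro j hj; rw [Finset.mem_Icc] at hj ⊢; omega
      · intro j _; ring
      · intro j _; ring
      · intro j _
        rw [show (n:ℤ) + 1 - ((n:ℤ) + 1 - j) = j by ring]
    have hneg : ∑ j ∈ Finset.Icc (1:ℤ) (n:ℤ), b ((n:ℤ) + 1 - j) =
        ∑ j ∈ Finset.Icc (1:ℤ) (n:ℤ), (- b j) := by
      apply Finset.sum_congr rfl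
      intro j hj
      rw [Finset.mem_Icc] at hj
      exact hanti j hj.1 hj.2
    rw [hneg, Finset.sum_neg_distrib] at hswap
    omega
  have hrho : ∑ j ∈ Finset.Icc (1:ℤ) (n:ℤ), rhoF n b (b j) j =
      ∑ j ∈ Finset.Icc (1:ℤ) (n:ℤ), j := by
    apply Finset.sum_bij' (fun j _ => rhoF n b (b j) j)
      (fun j _ => rhoF n b (b j) j)
    · intro j hj
      rw [Finset.mem_Icc] at hj ⊢
      obtain ⟨-, -, h3, h4⟩ := rho_bnd (b := b) hj.1 hj.2
      exact ⟨h3, h4⟩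
    · intro j hj
      rw [Finset.mem_Icc] at hj ⊢
      obtain ⟨-, -, h3, h4⟩ := rho_bnd (b := b) hj.1 hj.2
      exact ⟨h3, h4⟩
    · intro j hj
      rw [Finset.mem_Icc] at hj
      have hv := rho_val hmono hanti hj.1 hj.2
      rw [hv]
      exact rho_rho hanti hj.1 hj.2
    · intro j hj
      rw [Finset.mem_Icc] at hj
      have hv := rho_val hmono hanti hj.1 hj.2
      rw [hv]
      exact rho_rho hanti hj.1 hj.2
    · intro j _; rfl
  rw [hrho, ← Finset.mul_sum, hb0]
  ring

end FfunProps

end St13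

namespace St13

/-- the abstract rank formula: an involution matching blocks of `b` to blocks of `-b`,
strictly increasing on blocks, must be given by `rhoF`. -/
lemma rank_formula {n : ℕ} {b R : ℤ → ℤ}
    (hmono : ∀ x y, 1 ≤ x → x ≤ y → y ≤ (n:ℤ) → b x ≤ b y)
    (hanti : ∀ x, 1 ≤ x → x ≤ (n:ℤ) → b ((n:ℤ)+1-x) = - b x)
    (hRmem : ∀ x, 1 ≤ x → x ≤ (n:ℤ) → 1 ≤ R x ∧ R x ≤ (n:ℤ))
    (hbR : ∀ x, 1 ≤ x → x ≤ (n:ℤ) → b (R x) = -(b x))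
    (hRR : ∀ x, 1 ≤ x → x ≤ (n:ℤ) → R (R x) = x)
    (hRst : ∀ x y, 1 ≤ x → x < y → y ≤ (n:ℤ) → b x = b y → R x < R y)
    {j : ℤ} (hj1 : 1 ≤ j) (hj2 : j ≤ (n:ℤ)) :
    R j = rhoF n b (b j) j := by
  obtain ⟨b1, b2, b3, b4, b5, b6⟩ := blk_basic (b := b) hj1 hj2
  obtain ⟨hneg1, hneg2⟩ := mnB_mxB_neg hanti hj1 hj2
  obtain ⟨hRj1, hRj2⟩ := hRmem j hj1 hj2
  have hbRj : b (R j) = -(b j) := hbR j hj1 hj2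
  -- R j lies in the reflected block interval
  obtain ⟨c1, c2, c3, c4, c5, c6⟩ := blk_basic (b := b) hRj1 hRj2
  rw [hbRj] at c2 c3
  rw [hneg1] at c2
  rw [hneg2] at c3
  -- c2 : n+1-mx ≤ R j, c3 : R j ≤ n+1-mn
  have hs : (Blk n b (b j)).filter (· ≤ j) = Finset.Icc (mnB n b (b j)) j := by
    ext x
    simp only [Finset.mem_filter, Finset.mem_Icc, mem_blk]
    constructor
    · rintro ⟨⟨h1, h2, h3⟩, h4⟩
      refine ⟨?_, h4⟩
      exact (mnB_spec (blk_ne (b := b) hj1 hj2)).2 x (mem_blk.mpr ⟨h1, h2, h3⟩)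
    · rintro ⟨h1, h2⟩
      exact ⟨⟨by omega, by omega, blk_interval hmono hj1 hj2 h1 (by omega)⟩, h2⟩
  have ht : (Blk n b (-(b j))).filter (· ≤ R j) =
      Finset.Icc ((n:ℤ)+1 - mxB n b (b j)) (R j) := by
    ext y
    simp only [Finset.mem_filter, Finset.mem_Icc, mem_blk]
    constructor
    · rintro ⟨⟨h1, h2, h3⟩, h4⟩
      refine ⟨?_, h4⟩
      have hne' : (Blk n b (-(b j))).Nonempty := ⟨y, mem_blk.mpr ⟨h1, h2, h3⟩⟩
      have := (mnB_spec hne').2 y (mem_blk.mpr ⟨h1, h2, h3⟩)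
      omega
    · rintro ⟨h1, h2⟩
      exact ⟨⟨by omega, by omega,
        blk_interval_neg hmono hanti hj1 hj2 h1 (by omega)⟩, h2⟩
  have hcard : ((Blk n b (b j)).filter (· ≤ j)).card =
      ((Blk n b (-(b j))).filter (· ≤ R j)).card := by
    apply Finset.card_bij' (fun x _ => R x) (fun y _ => R y)
    · intro x hx
      simp only [Finset.mem_filter, mem_blk] at hx ⊢
      obtain ⟨⟨h1, h2, h3⟩, h4⟩ := hx
      refine ⟨⟨(hRmem x h1 h2).1, (hRmem x h1 h2).2, by rw [hbR x h1 h2, h3]⟩, ?_⟩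
      rcases eq_or_lt_of_le h4 with rfl | hlt
      · exact le_refl _
      · exact le_of_lt (hRst x j h1 hlt hj2 (by omega))
    · intro y hy
      simp only [Finset.mem_filter, mem_blk] at hy ⊢
      obtain ⟨⟨h1, h2, h3⟩, h4⟩ := hy
      refine ⟨⟨(hRmem y h1 h2).1, (hRmem y h1 h2).2, by rw [hbR y h1 h2, h3]; ring⟩, ?_⟩
      by_contra hcon
      push_neg at hcon
      have hRy : b (R y) = b j := by rw [hbR y h1 h2, h3]; ring
      have := hRst j (R y) hj1 hcon (hRmem y h1 h2).2 (by omega)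
      rw [hRR y h1 h2] at this
      omega
    · intro x hx
      simp only [Finset.mem_filter, mem_blk] at hx
      exact hRR x hx.1.1 hx.1.2.1
    · intro y hy
      simp only [Finset.mem_filter, mem_blk] at hy
      exact hRR y hy.1.1 hy.1.2.1
  rw [hs, ht, Int.card_Icc, Int.card_Icc] at hcard
  have h1 : j + 1 - mnB n b (b j) ≥ 0 := by omega
  have h2 : R j + 1 - ((n:ℤ)+1 - mxB n b (b j)) ≥ 0 := by omega
  rw [rhoF]
  omega

noncomputable def LamZ (n : ℕ) (w : Equiv.Perm ℤ) (j : ℤ) : ℤ := (w j - 1) / (n:ℤ)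

noncomputable def RZ (n : ℕ) (w : Equiv.Perm ℤ) (j : ℤ) : ℤ :=
  w j - (n:ℤ) * LamZ n w j

lemma RZ_eq_res {n : ℕ} (w : Equiv.Perm ℤ) (j : ℤ) : RZ n w j = resZ n (w j) := rfl

lemma RZ_bounds {n : ℕ} (hn : 0 < n) (w : Equiv.Perm ℤ) (j : ℤ) :
    1 ≤ RZ n w j ∧ RZ n w j ≤ (n:ℤ) ∧ w j = (n:ℤ) * LamZ n w j + RZ n w j := by
  obtain ⟨h1, h2, h3⟩ := res_spec hn (w j)
  exact ⟨h1, h2, by rw [RZ]; ring⟩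

section WProps

variable {n : ℕ} {w : Equiv.Perm ℤ}

lemma G2 (hn : 0 < n) (htr : ∀ j, w (j + (n:ℤ)) = w j + n)
    (hww : ∀ x, w (w x) = x) {j : ℤ} (hj1 : 1 ≤ j) (hj2 : j ≤ (n:ℤ)) :
    RZ n w (RZ n w j) = j ∧ LamZ n w (RZ n w j) = - LamZ n w j := by
  obtain ⟨r1, r2, r3⟩ := RZ_bounds hn w j
  have htr' : ∀ (k x : ℤ), w (x + k * n) = w x + k * n := trans_mul htr
  have hcm : (n:ℤ) * LamZ n w j = LamZ n w j * (n:ℤ) := mul_comm _ _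
  have hcm2 : (n:ℤ) * (-(LamZ n w j)) = -(LamZ n w j * (n:ℤ)) := by ring
  have hwR : w (RZ n w j) = (n:ℤ) * (-(LamZ n w j)) + j := by
    have h1 : w (w j) = j := hww j
    have h2 : w j = RZ n w j + (LamZ n w j) * n := by omega
    rw [h2, htr' (LamZ n w j) (RZ n w j)] at h1
    omega
  obtain ⟨hq, hres⟩ := q_of_decomp hn hj1 hj2 hwR
  constructor
  · rw [RZ_eq_res, hres]
  · rw [LamZ, hq]

lemma G1 (hn : 0 < n) (hincr : IncrOn n w)
    {x y : ℤ} (h1 : 1 ≤ x) (h2 : x ≤ y) (h3 : y ≤ (n:ℤ)) :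
    LamZ n w x ≤ LamZ n w y := by
  have hw : w x ≤ w y := by
    rcases eq_or_lt_of_le h2 with rfl | hlt
    · exact le_refl _
    · exact le_of_lt (hincr x y h1 hlt h3)
  exact Int.ediv_le_ediv (by exact_mod_cast hn) (by omega)

lemma G3 (hincr : IncrOn n w) {x y : ℤ} (h1 : 1 ≤ x) (h2 : x < y) (h3 : y ≤ (n:ℤ))
    (heq : LamZ n w x = LamZ n w y) : RZ n w x < RZ n w y := by
  have hw : w x < w y := hincr x y h1 h2 h3
  have hmul : (n:ℤ) * LamZ n w x = (n:ℤ) * LamZ n w y := by rw [heq]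
  rw [RZ, RZ]
  omega

lemma G4 (hn : 2 ≤ n) (htr : ∀ j, w (j + (n:ℤ)) = w j + n)
    (hww : ∀ x, w (w x) = x) (hincr : IncrOn n w)
    {j : ℤ} (hj1 : 1 ≤ j) (hj2 : j ≤ (n:ℤ)) :
    LamZ n w ((n:ℤ) + 1 - j) = - LamZ n w j := by
  have hn0 : 0 < n := by omega
  have C1 : ∀ c : ℤ, ∀ x : ℤ, 1 ≤ x → x ≤ (n:ℤ) → (LamZ n w x ≤ c ↔
      x ≤ ((((Finset.Icc (1:ℤ) (n:ℤ)).filter (fun y => LamZ n w y ≤ c)).card : ℕ) : ℤ)) := by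
    intro c x hx1 hx2
    constructor
    · intro hlam
      have hsub : Finset.Icc (1:ℤ) x ⊆
          (Finset.Icc (1:ℤ) (n:ℤ)).filter (fun y => LamZ n w y ≤ c) := by
        intro y hy
        rw [Finset.mem_Icc] at hy
        rw [Finset.mem_filter, Finset.mem_Icc]
        exact ⟨⟨by omega, by omega⟩, le_trans (G1 hn0 hincr hy.1 hy.2 hx2) hlam⟩
      have hle := Finset.card_le_card hsub
      rw [Int.card_Icc] at hle
      omega
    · intro hcard
      by_contra hcon
      push_neg at hcon
      have hsub : (Finset.Icc (1:ℤ) (n:ℤ)).filter (fun y => LamZ n w y ≤ c) ⊆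
          Finset.Icc (1:ℤ) (x - 1) := by
        intro y hy
        rw [Finset.mem_filter, Finset.mem_Icc] at hy
        rw [Finset.mem_Icc]
        refine ⟨hy.1.1, ?_⟩
        by_contra hy2
        push_neg at hy2
        have := G1 hn0 hincr hx1 (by omega : x ≤ y) hy.1.2
        omega
      have hle := Finset.card_le_card hsub
      rw [Int.card_Icc] at hle
      omega
  have C2 : ∀ c : ℤ,
      ((((Finset.Icc (1:ℤ) (n:ℤ)).filter (fun y => LamZ n w y ≤ c)).card : ℕ) : ℤ) +
      ((((Finset.Icc (1:ℤ) (n:ℤ)).filter (fun y => LamZ n w y ≤ -c-1)).card : ℕ) : ℤ)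
        = (n:ℤ) := by
    intro c
    have hstep1 : ((Finset.Icc (1:ℤ) (n:ℤ)).filter (fun y => LamZ n w y ≤ c)).card =
        ((Finset.Icc (1:ℤ) (n:ℤ)).filter (fun y => -c ≤ LamZ n w y)).card := by
      apply Finset.card_bij' (fun x _ => RZ n w x) (fun y _ => RZ n w y)
      · intro x hx
        rw [Finset.mem_filter, Finset.mem_Icc] at hx ⊢
        obtain ⟨⟨h1, h2⟩, h3⟩ := hx
        obtain ⟨r1, r2, -⟩ := RZ_bounds hn0 w x
        obtain ⟨-, g2⟩ := G2 hn0 htr hww h1 h2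
        exact ⟨⟨r1, r2⟩, by omega⟩
      · intro y hy
        rw [Finset.mem_filter, Finset.mem_Icc] at hy ⊢
        obtain ⟨⟨h1, h2⟩, h3⟩ := hy
        obtain ⟨r1, r2, -⟩ := RZ_bounds hn0 w y
        obtain ⟨-, g2⟩ := G2 hn0 htr hww h1 h2
        exact ⟨⟨r1, r2⟩, by omega⟩
      · intro x hx
        rw [Finset.mem_filter, Finset.mem_Icc] at hx
        exact (G2 hn0 htr hww hx.1.1 hx.1.2).1
      · intro y hy
        rw [Finset.mem_filter, Finset.mem_Icc] at hy
        exact (G2 hn0 htr hww hy.1.1 hy.1.2).1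
    have hstep2 := Finset.card_filter_add_card_filter_not
      (s := Finset.Icc (1:ℤ) (n:ℤ)) (p := fun y => LamZ n w y ≤ -c-1)
    have hcongr : (Finset.Icc (1:ℤ) (n:ℤ)).filter (fun y => ¬ (LamZ n w y ≤ -c-1)) =
        (Finset.Icc (1:ℤ) (n:ℤ)).filter (fun y => -c ≤ LamZ n w y) := by
      apply Finset.filter_congr
      intro x _
      simp only [not_le, eq_iff_iff]
      constructor <;> intro h <;> omega
    rw [hcongr, ← hstep1] at hstep2
    have hc : (Finset.Icc (1:ℤ) (n:ℤ)).card = n := by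
      rw [Int.card_Icc]
      omega
    rw [hc] at hstep2
    omega
  apply le_antisymm
  · rw [C1 (- LamZ n w j) ((n:ℤ) + 1 - j) (by omega) (by omega)]
    have h1 := C2 (- LamZ n w j)
    have h2 : ¬ ((j:ℤ) ≤ ((((Finset.Icc (1:ℤ) (n:ℤ)).filter
        (fun y => LamZ n w y ≤ LamZ n w j - 1)).card : ℕ) : ℤ)) := by
      rw [← C1 (LamZ n w j - 1) j hj1 hj2]
      omega
    rw [show -(- LamZ n w j) - 1 = LamZ n w j - 1 by ring] at h1
    omega
  · by_contra hcon
    push_neg at hcon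
    have h4 : LamZ n w ((n:ℤ) + 1 - j) ≤ - LamZ n w j - 1 := by omega
    rw [C1 (- LamZ n w j - 1) ((n:ℤ) + 1 - j) (by omega) (by omega)] at h4
    have h1 := C2 (LamZ n w j)
    have h2 : (j:ℤ) ≤ ((((Finset.Icc (1:ℤ) (n:ℤ)).filter
        (fun y => LamZ n w y ≤ LamZ n w j)).card : ℕ) : ℤ) := by
      rw [← C1 (LamZ n w j) j hj1 hj2]
    rw [show -(LamZ n w j) - 1 = - LamZ n w j - 1 by ring] at h1
    omega

end WProps

end St13

namespace St13

lemma lam_eq_LamZ {n : ℕ} (w : Equiv.Perm ℤ) (i : Fin n) :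
    lam n w i = LamZ n w (((i:ℕ):ℤ) + 1) := by
  rw [lam, Int.fdiv_eq_ediv_of_nonneg _ (by positivity), LamZ]

lemma aZ_lam_agree {n : ℕ} (hn : 0 < n) (w : Equiv.Perm ℤ) {x : ℤ}
    (h1 : 1 ≤ x) (h2 : x ≤ (n:ℤ)) : aZ n (lam n w) x = LamZ n w x := by
  rw [aZ_of_Icc hn _ h1 h2, lam_eq_LamZ]
  congr 1
  simp only [Fin.val_mk]
  omega

lemma omega_unpack {n : ℕ} (hn : 2 ≤ n) {w : Equiv.Perm ℤ} (hw : w ∈ OmegaSet n) :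
    (∀ j : ℤ, w (j + (n:ℤ)) = w j + n) ∧ (∀ x, w (w x) = x) ∧ IncrOn n w := by
  obtain ⟨haff, hinv, hincr⟩ := (omega_mem_iff hn w).mp hw
  exact ⟨haff.1, mul_self_apply hinv, hincr⟩

/-- identification: every element of `Ω_n` is given by the explicit formula. -/
lemma ident {n : ℕ} (hn : 2 ≤ n) {w : Equiv.Perm ℤ} (hw : w ∈ OmegaSet n) :
    ∀ j : ℤ, w j = Ffun n (aZ n (lam n w)) j := by
  have hn0 : 0 < n := by omega
  obtain ⟨htr, hww, hincr⟩ := omega_unpack hn hw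
  set b : ℤ → ℤ := aZ n (lam n w) with hb
  have hag : ∀ x : ℤ, 1 ≤ x → x ≤ (n:ℤ) → b x = LamZ n w x := fun x h1 h2 =>
    aZ_lam_agree hn0 w h1 h2
  have hmono_b : ∀ x y, 1 ≤ x → x ≤ y → y ≤ (n:ℤ) → b x ≤ b y := by
    intro x y h1 h2 h3
    rw [hag x h1 (by omega), hag y (by omega) h3]
    exact G1 hn0 hincr h1 h2 h3
  have hanti_b : ∀ x, 1 ≤ x → x ≤ (n:ℤ) → b ((n:ℤ)+1-x) = - b x := by
    intro x h1 h2
    rw [hag _ (by omega) (by omega), hag x h1 h2]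
    exact G4 hn htr hww hincr h1 h2
  have hRmem : ∀ x : ℤ, 1 ≤ x → x ≤ (n:ℤ) → 1 ≤ RZ n w x ∧ RZ n w x ≤ (n:ℤ) := by
    intro x _ _
    obtain ⟨r1, r2, -⟩ := RZ_bounds hn0 w x
    exact ⟨r1, r2⟩
  have hbR : ∀ x : ℤ, 1 ≤ x → x ≤ (n:ℤ) → b (RZ n w x) = -(b x) := by
    intro x h1 h2
    obtain ⟨r1, r2⟩ := hRmem x h1 h2
    rw [hag _ r1 r2, hag x h1 h2]
    exact (G2 hn0 htr hww h1 h2).2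
  have hRR : ∀ x : ℤ, 1 ≤ x → x ≤ (n:ℤ) → RZ n w (RZ n w x) = x := fun x h1 h2 =>
    (G2 hn0 htr hww h1 h2).1
  have hRst : ∀ x y, 1 ≤ x → x < y → y ≤ (n:ℤ) → b x = b y → RZ n w x < RZ n w y := by
    intro x y h1 h2 h3 heq
    rw [hag x h1 (by omega), hag y (by omega) h3] at heq
    exact G3 hincr h1 h2 h3 heq
  have hIcc : ∀ j : ℤ, 1 ≤ j → j ≤ (n:ℤ) → w j = Ffun n b j := by
    intro j hj1 hj2
    have hrank := rank_formula hmono_b hanti_b hRmem hbR hRR hRst hj1 hj2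
    obtain ⟨r1, r2, r3⟩ := RZ_bounds hn0 w j
    rw [Ffun_Icc (n := n) (b := b) hn0 hj1 hj2, ← hrank, hag j hj1 hj2]
    exact r3
  -- extend by translation
  intro x
  obtain ⟨r1, r2, r3⟩ := res_spec hn0 x
  have hper : ∀ j, b (j + (n:ℤ)) = b j := fun j => aZ_period (lam n w) j
  have hx : x = resZ n x + ((x-1)/(n:ℤ)) * n := by rw [resZ]; ring
  have e1 := trans_mul htr ((x-1)/(n:ℤ)) (resZ n x)
  have e2 := trans_mul (Ffun_add_n hn0 hper) ((x-1)/(n:ℤ)) (resZ n x)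
  rw [← hx] at e1 e2
  rw [e1, e2, hIcc (resZ n x) r1 r2]

lemma mapsto_part {n : ℕ} (hn : 2 ≤ n) {w : Equiv.Perm ℤ} (hw : w ∈ OmegaSet n) :
    (∀ i j : Fin n, i ≤ j → lam n w i ≤ lam n w j) ∧
      ∀ i : Fin n, lam n w i + lam n w i.rev = 0 := by
  have hn0 : 0 < n := by omega
  obtain ⟨htr, hww, hincr⟩ := omega_unpack hn hw
  constructor
  · intro i j hij
    rw [lam_eq_LamZ, lam_eq_LamZ]
    have hij' : (i:ℕ) ≤ (j:ℕ) := hij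
    have hjn : (j:ℕ) < n := j.isLt
    apply G1 hn0 hincr (by omega) (by exact_mod_cast by omega : ((i:ℕ):ℤ) + 1 ≤ ((j:ℕ):ℤ) + 1)
    have : ((j:ℕ):ℤ) < (n:ℤ) := by exact_mod_cast hjn
    omega
  · intro i
    rw [lam_eq_LamZ, lam_eq_LamZ]
    have hrev : ((i.rev : ℕ) : ℤ) + 1 = (n:ℤ) + 1 - (((i:ℕ):ℤ) + 1) := by
      have h1 : (i.rev : ℕ) = n - 1 - (i:ℕ) := by
        rw [Fin.val_rev]
        omega
      have h2 : (i:ℕ) < n := i.isLt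
      rw [h1]
      push_cast [Nat.cast_sub (by omega : (i:ℕ) ≤ n - 1), Nat.cast_sub (by omega : 1 ≤ n)]
      ring
    rw [hrev]
    have h2 : (i:ℕ) < n := i.isLt
    have := G4 hn htr hww hincr (j := ((i:ℕ):ℤ) + 1) (by omega)
      (by exact_mod_cast Nat.succ_le_of_lt h2)
    omega

lemma surj_part {n : ℕ} (hn : 2 ≤ n) (a : Fin n → ℤ)
    (ha1 : ∀ i j : Fin n, i ≤ j → a i ≤ a j) (ha2 : ∀ i : Fin n, a i + a i.rev = 0) :
    ∃ w : Equiv.Perm ℤ, w ∈ OmegaSet n ∧ lam n w = a := by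
  have hn0 : 0 < n := by omega
  set b : ℤ → ℤ := aZ n a with hb
  have hper : ∀ j, b (j + (n:ℤ)) = b j := fun j => aZ_period a j
  have hmono_b : ∀ x y, 1 ≤ x → x ≤ y → y ≤ (n:ℤ) → b x ≤ b y := by
    intro x y h1 h2 h3
    rw [hb, aZ_of_Icc hn0 a h1 (by omega), aZ_of_Icc hn0 a (by omega) h3]
    exact ha1 _ _ (by simp only [Fin.mk_le_mk]; omega)
  have hanti_b : ∀ x, 1 ≤ x → x ≤ (n:ℤ) → b ((n:ℤ)+1-x) = - b x := by
    intro x h1 h2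
    rw [hb, aZ_of_Icc hn0 a (by omega) (by omega), aZ_of_Icc hn0 a h1 h2]
    have hrev : (⟨((n:ℤ)+1-x-1).toNat, by omega⟩ : Fin n) =
        (⟨(x-1).toNat, by omega⟩ : Fin n).rev := by
      apply Fin.ext
      rw [Fin.val_rev]
      simp only
      omega
    rw [hrev]
    have := ha2 ⟨(x-1).toNat, by omega⟩
    omega
  have hinvol : Function.Involutive (Ffun n b) :=
    Ffun_invol hn0 hper hmono_b hanti_b
  set W : Equiv.Perm ℤ := ⟨Ffun n b, Ffun n b, hinvol.leftInverse, hinvol.rightInverse⟩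
    with hW
  have hWapp : ∀ x, W x = Ffun n b x := fun x => rfl
  have hWtr : ∀ j, W (j + (n:ℤ)) = W j + n := fun j => Ffun_add_n hn0 hper j
  have hlam : lam n W = a := by
    funext i
    rw [lam_eq_LamZ]
    have hi1 : (1:ℤ) ≤ ((i:ℕ):ℤ) + 1 := by omega
    have hi2 : ((i:ℕ):ℤ) + 1 ≤ (n:ℤ) := by exact_mod_cast Nat.succ_le_of_lt i.isLt
    obtain ⟨p1, p2, p3, p4⟩ := rho_bnd (n := n) (b := b) hi1 hi2
    have hF : W (((i:ℕ):ℤ) + 1) =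
        (n:ℤ) * b (((i:ℕ):ℤ) + 1) + rhoF n b (b (((i:ℕ):ℤ)+1)) (((i:ℕ):ℤ)+1) := by
      rw [hWapp, Ffun_Icc hn0 hi1 hi2]
    obtain ⟨hq, -⟩ := q_of_decomp hn0 p3 p4 hF
    rw [LamZ, hq, hb, aZ_fin hn0 a i]
  refine ⟨W, ?_, hlam⟩
  rw [omega_mem_iff hn]
  refine ⟨⟨hWtr, ?_⟩, ?_, ?_⟩
  · rw [hlam] at *
    calc ∑ x ∈ Finset.Icc (1:ℤ) (n:ℤ), W x
        = ∑ x ∈ Finset.Icc (1:ℤ) (n:ℤ), Ffun n b x := by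
          apply Finset.sum_congr rfl; intro x _; rw [hWapp]
      _ = ∑ x ∈ Finset.Icc (1:ℤ) (n:ℤ), x := Ffun_sum hn0 hmono_b hanti_b
  · ext x
    rw [Equiv.Perm.mul_apply, hWapp, hWapp, hinvol x, Equiv.Perm.one_apply]
  · apply incrOn_of_adj
    intro x h1 h2
    rw [hWapp, hWapp]
    exact Ffun_incr hn0 hmono_b h1 h2

end St13

/-- For every `n ≥ 2`, the map `w ↦ λ(w)` is a bijection from `Ω_n` onto the
set of weakly increasing antisymmetric integer sequences of length `n` (antisymmetric meaning
`a_i + a_{n+1−i} = 0`, i.e. `a i + a i.rev = 0` in `Fin n` indexing). -/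
theorem statement13 (n : ℕ) (hn : 2 ≤ n) :
    Set.BijOn (lam n) (OmegaSet n)
      {a : Fin n → ℤ | (∀ i j : Fin n, i ≤ j → a i ≤ a j) ∧
        ∀ i : Fin n, a i + a i.rev = 0} := by
  refine ⟨?_, ?_, ?_⟩
  · intro w hw
    exact St13.mapsto_part hn hw
  · intro w hw w' hw' heq
    have h1 := St13.ident hn hw
    have h2 := St13.ident hn hw'
    apply Equiv.coe_fn_injective
    funext x
    show w x = w' x
    rw [h1 x, heq, h2 x]
  · rintro a ⟨ha1, ha2⟩
    obtain ⟨w, hw, hlam⟩ := St13.surj_part hn a ha1 ha2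
    exact ⟨w, hw, hlam⟩
end

section
/- Let n ≥ 2 and let w ∈ Ω'_n with λ(w) = (a_1, …, a_n). Then ℓ(w) = Σ_{1 ≤ i < j ≤ n} max(a_j − a_i − 1, 0). -/
open scoped Classical

lemma tau_aux (n : ℕ) : ∀ i : ℤ, (n : ℤ) + 1 - ((n : ℤ) + 1 - i) = i := fun i => by ring

/-- The bijection `τ_n : ℤ → ℤ`, `i ↦ n + 1 − i`. -/
def tauN (n : ℕ) : Equiv.Perm ℤ :=
  ⟨fun i => (n : ℤ) + 1 - i, fun i => (n : ℤ) + 1 - i, tau_aux n, tau_aux n⟩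

/-- `Ω'_n`: the set of `*`-twisted involutions in `S̃_n` (i.e. `(τ_n ∘ w)² = id`) that are
minimal length double coset representatives for the subgroup generated by `s_1, …, s_{n−1}`. -/
def Omega'Set (n : ℕ) : Set (Equiv.Perm ℤ) :=
  {w | IsAffinePerm n w ∧ (tauN n * w) * (tauN n * w) = 1 ∧
    ∀ i : ℕ, 1 ≤ i → i ≤ n - 1 →
      ellA n (sGen n i * w) = ellA n w + 1 ∧ ellA n (w * sGen n i) = ellA n w + 1}


namespace St14

lemma dvd_window_eq (n : ℕ) {x : ℤ} (hd : (n:ℤ) ∣ x) (h1 : -(n:ℤ) < x) (h2 : x < (n:ℤ)) : x = 0 :=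
  Int.eq_zero_of_abs_lt_dvd hd (abs_lt.mpr ⟨h1, h2⟩)

lemma per (n : ℕ) (w : Equiv.Perm ℤ) (hA : ∀ i : ℤ, w (i + (n:ℤ)) = w i + (n:ℤ)) :
    ∀ (k i : ℤ), w (i + k * (n:ℤ)) = w i + k * (n:ℤ) := by
  intro k
  induction k using Int.induction_on with
  | zero => simp
  | succ k ih =>
      intro i
      have h1 : i + ((k:ℤ) + 1) * (n:ℤ) = (i + k * (n:ℤ)) + (n:ℤ) := by ring
      rw [h1, hA, ih]; ring
  | pred k ih =>
      intro i
      have h1 : i + (-(k:ℤ) - 1) * (n:ℤ) + (n:ℤ) = i + (-(k:ℤ)) * (n:ℤ) := by ring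
      have h2 := hA (i + (-(k:ℤ) - 1) * (n:ℤ))
      rw [h1, ih i] at h2
      have h3 : (-(k:ℤ)) * (n:ℤ) = (-(k:ℤ) - 1) * (n:ℤ) + (n:ℤ) := by ring
      linarith

lemma count_card (n : ℕ) (hn : 0 < n) (L B : ℤ) (hB1 : -(n:ℤ) < B) (hB2 : B ≤ -1) :
    ((Finset.Ioo L B).filter (fun m => (n:ℤ) ∣ m)).card = ((-L - 1) / (n:ℤ)).toNat := by
  have hn0 : (0:ℤ) < (n:ℤ) := by exact_mod_cast hn
  have h1 : ((-L - 1)/(n:ℤ)).toNat = (Finset.Ioc (0:ℤ) ((-L-1)/(n:ℤ))).card := by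
    rw [Int.card_Ioc, sub_zero]
  rw [h1]
  apply Finset.card_nbij' (fun m => -(m/(n:ℤ))) (fun k => -((n:ℤ)*k))
  · intro m hm
    simp only [Finset.mem_coe] at hm ⊢
    rw [Finset.mem_filter, Finset.mem_Ioo] at hm
    obtain ⟨⟨hm1, hm2⟩, c, rfl⟩ := hm
    rw [Int.mul_ediv_cancel_left c (ne_of_gt hn0), Finset.mem_Ioc]
    have hc : c < 0 := by
      by_contra h
      push_neg at h
      nlinarith
    constructor
    · omega
    · rw [Int.le_ediv_iff_mul_le hn0]
      have : (-c) * (n:ℤ) = -((n:ℤ)*c) := by ring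
      omega
  · intro k hk
    simp only [Finset.mem_coe] at hk ⊢
    rw [Finset.mem_Ioc] at hk
    rw [Finset.mem_filter, Finset.mem_Ioo]
    have hk2 := (Int.le_ediv_iff_mul_le hn0).mp hk.2
    refine ⟨⟨?_, ?_⟩, dvd_neg.mpr (dvd_mul_right _ _)⟩
    · have : k * (n:ℤ) = (n:ℤ) * k := mul_comm _ _
      omega
    · have : (n:ℤ) * 1 ≤ (n:ℤ) * k := by
        apply mul_le_mul_of_nonneg_left (by omega) (le_of_lt hn0)
      omega
  · intro m hm
    rw [Finset.mem_coe, Finset.mem_filter] at hm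
    obtain ⟨-, hdvd⟩ := hm
    beta_reduce
    have h2 : -(↑n * -(m / ↑n)) = (n:ℤ) * (m/(n:ℤ)) := by ring
    rw [h2, Int.mul_ediv_cancel' hdvd]
  · intro k _
    have h2 : -((n:ℤ)*k) = (n:ℤ) * (-k) := by ring
    beta_reduce
    rw [h2, Int.mul_ediv_cancel_left _ (ne_of_gt hn0)]
    ring

lemma not_dvd_one (n : ℕ) (hn : 2 ≤ n) : ¬ (n:ℤ) ∣ 1 := by
  intro h
  have := Int.le_of_dvd one_pos h
  omega

lemma sGen_apply (n : ℕ) (hn : 2 ≤ n) (i : ℕ) (j : ℤ) : (sGen n i) j = sFun n i j := by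
  rw [sGen, dif_neg (not_dvd_one n hn)]
  rfl

lemma sFun_eq (n : ℕ) (hn : 2 ≤ n) (i : ℕ) (hi1 : 1 ≤ i) (hi2 : i ≤ n - 1) (t : ℤ)
    (ht1 : 1 ≤ t) (ht2 : t ≤ (n:ℤ)) :
    sFun n i t = if t = (i:ℤ) then (i:ℤ)+1 else if t = (i:ℤ)+1 then (i:ℤ) else t := by
  unfold sFun
  by_cases h1 : t = (i:ℤ)
  · subst h1
    rw [if_pos (by simp), if_pos rfl]
  · by_cases h2 : t = (i:ℤ)+1
    · subst h2
      rw [if_neg (by simpa using not_dvd_one n hn), if_pos (by simp), if_neg (by omega),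
        if_pos rfl]
      ring
    · rw [if_neg, if_neg, if_neg h1, if_neg h2]
      · exact fun h => h2 (by have := dvd_window_eq n h (by omega) (by omega); omega)
      · exact fun h => h1 (by have := dvd_window_eq n h (by omega) (by omega); omega)

lemma dvd_shift (n : ℕ) (a : ℤ) : (n:ℤ) ∣ a + (n:ℤ) ↔ (n:ℤ) ∣ a :=
  ⟨fun h => by simpa using dvd_sub h (dvd_refl (n:ℤ)), fun h => dvd_add h (dvd_refl _)⟩

lemma sFun_per (n : ℕ) (i : ℕ) (t : ℤ) : sFun n i (t + (n:ℤ)) = sFun n i t + (n:ℤ) := by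
  unfold sFun
  have c1 : ((n:ℤ) ∣ t + (n:ℤ) - (i:ℤ)) ↔ ((n:ℤ) ∣ t - (i:ℤ)) := by
    have e : t + (n:ℤ) - (i:ℤ) = (t - (i:ℤ)) + (n:ℤ) := by ring
    rw [e, dvd_shift]
  have c2 : ((n:ℤ) ∣ t + (n:ℤ) - ((i:ℤ)+1)) ↔ ((n:ℤ) ∣ t - ((i:ℤ)+1)) := by
    have e : t + (n:ℤ) - ((i:ℤ)+1) = (t - ((i:ℤ)+1)) + (n:ℤ) := by ring
    rw [e, dvd_shift]
  by_cases h1 : (n:ℤ) ∣ t - (i:ℤ)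
  · rw [if_pos (c1.mpr h1), if_pos h1]; ring
  · by_cases h2 : (n:ℤ) ∣ t - ((i:ℤ)+1)
    · rw [if_neg (fun h => h1 (c1.mp h)), if_pos (c2.mpr h2), if_neg h1, if_pos h2]; ring
    · rw [if_neg (fun h => h1 (c1.mp h)), if_neg (fun h => h2 (c2.mp h)), if_neg h1, if_neg h2]

/-- The per-pair interval count. -/
noncomputable def cfun (n : ℕ) (w : Equiv.Perm ℤ) (p : ℤ × ℤ) : Finset ℤ :=
  (Finset.Ioo (w p.2 - w p.1) (p.2 - p.1)).filter (fun m => (n:ℤ) ∣ m)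

lemma ellA_formula (n : ℕ) (hn : 0 < n) (w : Equiv.Perm ℤ)
    (hA : ∀ i : ℤ, w (i + (n:ℤ)) = w i + (n:ℤ)) :
    ellA n w = ∑ p ∈ (Finset.Icc (1:ℤ) (n:ℤ)) ×ˢ (Finset.Icc (1:ℤ) (n:ℤ)),
      (cfun n w p).card := by
  classical
  have hper := per n w hA
  have hn0 : (0:ℤ) < (n:ℤ) := by exact_mod_cast hn
  have hnz : (n:ℤ) ≠ 0 := ne_of_gt hn0
  set A := (Finset.Icc (1:ℤ) (n:ℤ)) ×ˢ (Finset.Icc (1:ℤ) (n:ℤ)) with hAdef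
  set F := A.biUnion (fun p => (cfun n w p).image (fun m => (p.1 + m, p.2))) with hF
  have hset : {p : ℤ × ℤ | p.1 < p.2 ∧ 1 ≤ p.2 ∧ p.2 ≤ (n : ℤ) ∧ w p.2 < w p.1} = ↑F := by
    ext ⟨x, j⟩
    simp only [Set.mem_setOf_eq, Finset.coe_biUnion, Finset.mem_coe]
    constructor
    · rintro ⟨hxj, hj1, hjn, hwlt⟩
      have hx : x = ((x-1) % (n:ℤ) + 1) + ((x-1)/(n:ℤ)) * (n:ℤ) := by
        have := Int.mul_ediv_add_emod (x-1) (n:ℤ)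
        linarith
      have hm0 : 0 ≤ (x-1) % (n:ℤ) := Int.emod_nonneg _ hnz
      have hm1 : (x-1) % (n:ℤ) < (n:ℤ) := Int.emod_lt_of_pos _ hn0
      have hwx : w x = w ((x-1) % (n:ℤ) + 1) + ((x-1)/(n:ℤ)) * (n:ℤ) := by
        conv_lhs => rw [hx]
        rw [hper]
      refine Finset.mem_coe.mpr (Finset.mem_biUnion.mpr ⟨((x-1) % (n:ℤ) + 1, j), ?_, ?_⟩)
      · rw [hAdef]
        exact Finset.mem_product.mpr ⟨Finset.mem_Icc.mpr ⟨by omega, by omega⟩,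
          Finset.mem_Icc.mpr ⟨hj1, hjn⟩⟩
      · refine Finset.mem_image.mpr ⟨(x-1)/(n:ℤ) * (n:ℤ), ?_, ?_⟩
        · simp only [cfun, Finset.mem_filter, Finset.mem_Ioo]
          exact ⟨⟨by omega, by omega⟩, ⟨(x-1)/(n:ℤ), mul_comm _ _⟩⟩
        · rw [Prod.mk.injEq]
          exact ⟨by omega, rfl⟩
    · intro hmem
      obtain ⟨p, hpA, hmem2⟩ := Finset.mem_biUnion.mp (Finset.mem_coe.mp hmem)
      obtain ⟨m, hm, heq⟩ := Finset.mem_image.mp hmem2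
      obtain ⟨hIoo, hdvd⟩ := Finset.mem_filter.mp hm
      obtain ⟨hlo, hhi⟩ := Finset.mem_Ioo.mp hIoo
      rw [hAdef] at hpA
      obtain ⟨hp1, hp2⟩ := Finset.mem_product.mp hpA
      rw [Finset.mem_Icc] at hp1 hp2
      obtain ⟨c, rfl⟩ := hdvd
      have hwx : w (p.1 + (n:ℤ)*c) = w p.1 + (n:ℤ)*c := by
        have := hper c p.1
        rw [mul_comm c (n:ℤ)] at this
        exact this
      rw [Prod.mk.injEq] at heq
      obtain ⟨hxe, hje⟩ := heq
      refine ⟨by omega, by omega, by omega, ?_⟩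
      rw [← hje, ← hxe, hwx]
      omega
  have hcard : ellA n w = F.card := by
    rw [ellA, hset, Set.ncard_coe_finset]
  rw [hcard, hF, Finset.card_biUnion]
  · apply Finset.sum_congr rfl
    intro p _
    apply Finset.card_image_of_injective
    intro a b hab
    rw [Prod.mk.injEq] at hab
    omega
  · intro p hp q hq hpq
    rw [Finset.mem_coe] at hp hq
    rw [Function.onFun, Finset.disjoint_left]
    intro z hz1 hz2
    obtain ⟨m1, hm1, he1⟩ := Finset.mem_image.mp hz1
    obtain ⟨m2, hm2, he2⟩ := Finset.mem_image.mp hz2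
    rw [hAdef] at hp hq
    obtain ⟨hp1, hp2⟩ := Finset.mem_product.mp hp
    obtain ⟨hq1, hq2⟩ := Finset.mem_product.mp hq
    rw [Finset.mem_Icc] at hp1 hp2 hq1 hq2
    obtain ⟨-, c1, rfl⟩ := Finset.mem_filter.mp hm1
    obtain ⟨-, c2, rfl⟩ := Finset.mem_filter.mp hm2
    rw [Prod.mk.injEq] at he1 he2
    apply hpq
    have hd : (n:ℤ) ∣ p.1 - q.1 := by
      have : p.1 - q.1 = (n:ℤ)*c2 - (n:ℤ)*c1 := by omega
      exact this ▸ dvd_sub (dvd_mul_right _ _) (dvd_mul_right _ _)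
    have := dvd_window_eq n hd (by omega) (by omega)
    have hfst : p.1 = q.1 := by omega
    have hsnd : p.2 = q.2 := by omega
    exact Prod.ext hfst hsnd

lemma filter_Ioo_congr (n : ℕ) (X B B' : ℤ) (h : ∀ m : ℤ, (n:ℤ) ∣ m → (m < B ↔ m < B')) :
    (Finset.Ioo X B).filter (fun m => (n:ℤ) ∣ m)
      = (Finset.Ioo X B').filter (fun m => (n:ℤ) ∣ m) := by
  ext m
  simp only [Finset.mem_filter, Finset.mem_Ioo]
  constructor
  · rintro ⟨⟨h1, h2⟩, h3⟩
    exact ⟨⟨h1, (h m h3).mp h2⟩, h3⟩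
  · rintro ⟨⟨h1, h2⟩, h3⟩
    exact ⟨⟨h1, (h m h3).mpr h2⟩, h3⟩

lemma s_order (n : ℕ) (hn : 2 ≤ n) (i : ℕ) (hi1 : 1 ≤ i) (hi2 : i ≤ n - 1)
    (x j : ℤ) (hx1 : 1 ≤ x) (hx2 : x ≤ (n:ℤ)) (hj1 : 1 ≤ j) (hj2 : j ≤ (n:ℤ))
    (hne1 : ¬(x = (i:ℤ) ∧ j = (i:ℤ)+1)) (hne2 : ¬(x = (i:ℤ)+1 ∧ j = (i:ℤ)))
    (m : ℤ) (hd : (n:ℤ) ∣ m) :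
    (m < j - x ↔ m < sGen n i j - sGen n i x) := by
  rw [sGen_apply n hn, sGen_apply n hn, sFun_eq n hn i hi1 hi2 x hx1 hx2,
    sFun_eq n hn i hi1 hi2 j hj1 hj2]
  rcases le_or_gt m (-(n:ℤ)) with hm | hm
  · constructor <;> intro hh <;> (try split_ifs) <;> omega
  · rcases le_or_gt (n:ℤ) m with hm2 | hm2
    · constructor <;> intro hh <;> exfalso <;> (try split_ifs at hh) <;> omega
    · have hm0 : m = 0 := dvd_window_eq n hd hm hm2
      subst hm0
      split_ifs <;> omega

lemma window_adj (n : ℕ) (hn : 2 ≤ n) (w : Equiv.Perm ℤ)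
    (hA : ∀ t : ℤ, w (t + (n:ℤ)) = w t + (n:ℤ))
    (hmin : ∀ i : ℕ, 1 ≤ i → i ≤ n - 1 → ellA n (w * sGen n i) = ellA n w + 1)
    (i : ℕ) (hi1 : 1 ≤ i) (hi2 : i ≤ n - 1) : w (i:ℤ) < w ((i:ℤ) + 1) := by
  classical
  have hn0 : 0 < n := by omega
  have hnz : (0:ℤ) < (n:ℤ) := by exact_mod_cast hn0
  by_contra hcon
  push_neg at hcon
  have hne : w ((i:ℤ)+1) ≠ w (i:ℤ) := fun h => by
    have := w.injective h
    omega
  have hlt : w ((i:ℤ)+1) < w (i:ℤ) := lt_of_le_of_ne hcon hne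
  set σ := sGen n i with hσ
  have hσinv : ∀ t, σ (σ t) = t := fun t => by
    rw [hσ, sGen_apply n hn, sGen_apply n hn]
    exact sFun_invol n i (not_dvd_one n hn) t
  have hswin : ∀ t : ℤ, 1 ≤ t → t ≤ (n:ℤ) → 1 ≤ σ t ∧ σ t ≤ (n:ℤ) := by
    intro t h1 h2
    rw [hσ, sGen_apply n hn, sFun_eq n hn i hi1 hi2 t h1 h2]
    split_ifs <;> omega
  have hsi : σ (i:ℤ) = (i:ℤ)+1 := by
    rw [hσ, sGen_apply n hn, sFun_eq n hn i hi1 hi2 (i:ℤ) (by omega) (by omega), if_pos rfl]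
  have hsi1 : σ ((i:ℤ)+1) = (i:ℤ) := by
    rw [hσ, sGen_apply n hn, sFun_eq n hn i hi1 hi2 ((i:ℤ)+1) (by omega) (by omega),
      if_neg (by omega), if_pos rfl]
  set w' := w * σ with hw'
  have hA' : ∀ t : ℤ, w' (t + (n:ℤ)) = w' t + (n:ℤ) := by
    intro t
    rw [hw', Equiv.Perm.mul_apply, Equiv.Perm.mul_apply, hσ, sGen_apply n hn,
      sGen_apply n hn, sFun_per, hA]
  set A := (Finset.Icc (1:ℤ) (n:ℤ)) ×ˢ (Finset.Icc (1:ℤ) (n:ℤ)) with hAdef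
  have hf1 := ellA_formula n hn0 w hA
  have hf2 := ellA_formula n hn0 w' hA'
  set g : ℤ × ℤ → ℕ := fun p =>
    ((Finset.Ioo (w p.2 - w p.1) (σ p.2 - σ p.1)).filter (fun m => (n:ℤ) ∣ m)).card with hg
  have hreidx : ∑ p ∈ A, (cfun n w' p).card = ∑ p ∈ A, g p := by
    apply Finset.sum_nbij' (fun p => (σ p.1, σ p.2)) (fun p => (σ p.1, σ p.2))
    · intro a ha
      rw [hAdef] at ha ⊢
      obtain ⟨h1, h2⟩ := Finset.mem_product.mp ha
      rw [Finset.mem_Icc] at h1 h2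
      have e1 := hswin a.1 h1.1 h1.2
      have e2 := hswin a.2 h2.1 h2.2
      exact Finset.mem_product.mpr ⟨Finset.mem_Icc.mpr e1, Finset.mem_Icc.mpr e2⟩
    · intro a ha
      rw [hAdef] at ha ⊢
      obtain ⟨h1, h2⟩ := Finset.mem_product.mp ha
      rw [Finset.mem_Icc] at h1 h2
      have e1 := hswin a.1 h1.1 h1.2
      have e2 := hswin a.2 h2.1 h2.2
      exact Finset.mem_product.mpr ⟨Finset.mem_Icc.mpr e1, Finset.mem_Icc.mpr e2⟩
    · intro a _
      exact Prod.ext (hσinv a.1) (hσinv a.2)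
    · intro a _
      exact Prod.ext (hσinv a.1) (hσinv a.2)
    · intro a _
      rw [hg]
      simp only [cfun, hw', Equiv.Perm.mul_apply, hσinv]
  set a : ℤ × ℤ := ((i:ℤ), (i:ℤ)+1) with hadef
  set b : ℤ × ℤ := ((i:ℤ)+1, (i:ℤ)) with hbdef
  have haA : a ∈ A := by
    rw [hAdef, hadef]
    exact Finset.mem_product.mpr ⟨Finset.mem_Icc.mpr ⟨by omega, by omega⟩,
      Finset.mem_Icc.mpr ⟨by omega, by omega⟩⟩
  have hbA : b ∈ A.erase a := by
    refine Finset.mem_erase.mpr ⟨by rw [hadef, hbdef]; intro h; rw [Prod.mk.injEq] at h; omega, ?_⟩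
    rw [hAdef, hbdef]
    exact Finset.mem_product.mpr ⟨Finset.mem_Icc.mpr ⟨by omega, by omega⟩,
      Finset.mem_Icc.mpr ⟨by omega, by omega⟩⟩
  have hsplit1 : ∑ p ∈ A, (cfun n w p).card
      = ∑ p ∈ (A.erase a).erase b, (cfun n w p).card + (cfun n w b).card + (cfun n w a).card := by
    rw [Finset.sum_erase_add _ _ hbA, Finset.sum_erase_add _ _ haA]
  have hsplit2 : ∑ p ∈ A, g p
      = ∑ p ∈ (A.erase a).erase b, g p + g b + g a := by
    rw [Finset.sum_erase_add _ _ hbA, Finset.sum_erase_add _ _ haA]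
  have hcongr : ∑ p ∈ (A.erase a).erase b, (cfun n w p).card
      = ∑ p ∈ (A.erase a).erase b, g p := by
    apply Finset.sum_congr rfl
    intro p hp
    have hpb := (Finset.mem_erase.mp hp).1
    have hp' := (Finset.mem_erase.mp hp).2
    have hpa := (Finset.mem_erase.mp hp').1
    have hpA := (Finset.mem_erase.mp hp').2
    rw [hAdef] at hpA
    obtain ⟨h1, h2⟩ := Finset.mem_product.mp hpA
    rw [Finset.mem_Icc] at h1 h2
    rw [hg]
    simp only [cfun]
    congr 1
    apply filter_Ioo_congr
    intro m hd
    apply s_order n hn i hi1 hi2 p.1 p.2 h1.1 h1.2 h2.1 h2.2 _ _ m hd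
    · intro hc
      apply hpa
      rw [hadef]
      exact Prod.ext hc.1 hc.2
    · intro hc
      apply hpb
      rw [hbdef]
      exact Prod.ext hc.1 hc.2
  have hb0 : (cfun n w b).card = 0 := by
    rw [hbdef]
    simp only [cfun]
    rw [Finset.Ioo_eq_empty (by omega : ¬ w (i:ℤ) - w ((i:ℤ)+1) < (i:ℤ) - ((i:ℤ)+1))]
    simp
  have hgb0 : g b = 0 := by
    rw [hg, hbdef]
    simp only
    rw [hsi, hsi1]
    rw [Finset.Ioo_eq_empty (by omega : ¬ w (i:ℤ) - w ((i:ℤ)+1) < (i:ℤ)+1 - (i:ℤ))]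
    simp
  have hkey : (cfun n w a).card = g a + 1 := by
    rw [hg, hadef]
    simp only [cfun]
    rw [hsi, hsi1]
    have hins : (Finset.Ioo (w ((i:ℤ)+1) - w (i:ℤ)) ((i:ℤ)+1 - (i:ℤ))).filter
          (fun m => (n:ℤ) ∣ m)
        = insert 0 ((Finset.Ioo (w ((i:ℤ)+1) - w (i:ℤ)) ((i:ℤ) - ((i:ℤ)+1))).filter
          (fun m => (n:ℤ) ∣ m)) := by
      ext m
      simp only [Finset.mem_insert, Finset.mem_filter, Finset.mem_Ioo]
      constructor
      · rintro ⟨⟨hm1, hm2⟩, c, rfl⟩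
        rcases eq_or_ne c 0 with rfl | hc0
        · left; simp
        · right
          have hcneg : c ≤ -1 := by
            rcases lt_or_ge c 0 with h | h
            · omega
            · exfalso
              have h1 : (1:ℤ) ≤ c := by omega
              have : (n:ℤ) * 1 ≤ (n:ℤ) * c := mul_le_mul_of_nonneg_left h1 (le_of_lt hnz)
              omega
          have : (n:ℤ) * c ≤ (n:ℤ) * (-1) := mul_le_mul_of_nonneg_left hcneg (le_of_lt hnz)
          refine ⟨⟨hm1, by omega⟩, ⟨c, rfl⟩⟩
      · rintro (rfl | ⟨⟨hm1, hm2⟩, hdv⟩)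
        · exact ⟨⟨by omega, by omega⟩, dvd_zero _⟩
        · exact ⟨⟨hm1, by omega⟩, hdv⟩
    rw [hins, Finset.card_insert_of_notMem]
    · intro hc
      rw [Finset.mem_filter, Finset.mem_Ioo] at hc
      omega
  have hm := hmin i hi1 hi2
  rw [hf1, hf2, hreidx, hsplit1, hsplit2, hcongr, hb0, hgb0, hkey] at hm
  omega

lemma window_mono (n : ℕ) (hn : 2 ≤ n) (w : Equiv.Perm ℤ)
    (hA : ∀ t : ℤ, w (t + (n:ℤ)) = w t + (n:ℤ))
    (hmin : ∀ i : ℕ, 1 ≤ i → i ≤ n - 1 → ellA n (w * sGen n i) = ellA n w + 1) :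
    ∀ p q : ℤ, 1 ≤ p → p < q → q ≤ (n:ℤ) → w p < w q := by
  have adj : ∀ p : ℤ, 1 ≤ p → p ≤ (n:ℤ) - 1 → w p < w (p+1) := by
    intro p hp1 hp2
    have h := window_adj n hn w hA hmin p.toNat (by omega) (by omega)
    have he : ((p.toNat : ℕ) : ℤ) = p := by omega
    rwa [he] at h
  have key : ∀ k : ℕ, ∀ p : ℤ, 1 ≤ p → p + k + 1 ≤ (n:ℤ) → w p < w (p + k + 1) := by
    intro k
    induction k with
    | zero =>
      intro p h1 h2
      have := adj p h1 (by push_cast at h2 ⊢; omega)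
      simpa using this
    | succ k ih =>
      intro p h1 h2
      push_cast at h2
      have h3 := ih p h1 (by omega)
      have h4 := adj (p + k + 1) (by omega) (by omega)
      have he : p + ((k:ℤ)+1) + 1 = (p + k + 1) + 1 := by ring
      calc w p < w (p + k + 1) := h3
        _ < w (p + k + 1 + 1) := h4
        _ = w (p + ((k + 1 : ℕ):ℤ) + 1) := by push_cast; ring_nf
  intro p q hp hpq hq
  have h := key (q - p - 1).toNat p hp (by omega)
  rwa [show p + ((q-p-1).toNat : ℤ) + 1 = q by omega] at h

lemma star_eq (n : ℕ) (w : Equiv.Perm ℤ) (hinv : (tauN n * w) * (tauN n * w) = 1) :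
    ∀ j : ℤ, w ((n:ℤ) + 1 - w j) = (n:ℤ) + 1 - j := by
  intro j
  have h := Equiv.ext_iff.mp hinv j
  simp only [Equiv.Perm.mul_apply, Equiv.Perm.one_apply, tauN, Equiv.coe_fn_mk] at h
  omega

lemma cfun_zero (n : ℕ) (hn : 2 ≤ n) (w : Equiv.Perm ℤ)
    (hmono : ∀ p q : ℤ, 1 ≤ p → p < q → q ≤ (n:ℤ) → w p < w q)
    (x y : ℤ) (hx1 : 1 ≤ x) (hx2 : x ≤ (n:ℤ)) (hy2 : y ≤ (n:ℤ)) (hle : x ≤ y) :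
    ((Finset.Ioo (w y - w x) (y - x)).filter (fun m => (n:ℤ) ∣ m)) = ∅ := by
  have hnz : (0:ℤ) < (n:ℤ) := by exact_mod_cast (by omega : 0 < n)
  rcases eq_or_lt_of_le hle with rfl | hlt
  · simp
  · rw [Finset.eq_empty_iff_forall_notMem]
    intro m hm
    rw [Finset.mem_filter, Finset.mem_Ioo] at hm
    obtain ⟨⟨h1, h2⟩, c, rfl⟩ := hm
    have hw := hmono x y hx1 hlt hy2
    have hc : 1 ≤ c := by
      by_contra h
      push_neg at h
      have hc0 : c ≤ 0 := by omega
      have : (n:ℤ) * c ≤ (n:ℤ) * 0 := mul_le_mul_of_nonneg_left hc0 (le_of_lt hnz)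
      omega
    have : (n:ℤ) * 1 ≤ (n:ℤ) * c := mul_le_mul_of_nonneg_left hc (le_of_lt hnz)
    omega

lemma pair_card (n : ℕ) (hn : 2 ≤ n) (w : Equiv.Perm ℤ)
    (hA : ∀ t : ℤ, w (t + (n:ℤ)) = w t + (n:ℤ))
    (hmono : ∀ p q : ℤ, 1 ≤ p → p < q → q ≤ (n:ℤ) → w p < w q)
    (hstar : ∀ j : ℤ, w ((n:ℤ) + 1 - w j) = (n:ℤ) + 1 - j)
    (p q : ℤ) (hp : 1 ≤ p) (hpq : p < q) (hq : q ≤ (n:ℤ)) :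
    (((Finset.Ioo (w p - w q) (p - q)).filter (fun m => (n:ℤ) ∣ m)).card : ℤ)
      = max ((w q - 1)/(n:ℤ) - (w p - 1)/(n:ℤ) - 1) 0 := by
  have hper := per n w hA
  have hn0 : (0:ℤ) < (n:ℤ) := by exact_mod_cast (by omega : 0 < n)
  have hnz : (n:ℤ) ≠ 0 := ne_of_gt hn0
  set Ap := (w p - 1)/(n:ℤ) with hAp
  set Aq := (w q - 1)/(n:ℤ) with hAq
  set Rp := (w p - 1) % (n:ℤ) + 1 with hRp
  set Rq := (w q - 1) % (n:ℤ) + 1 with hRq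
  have hwp : w p = (n:ℤ) * Ap + Rp := by
    rw [hAp, hRp]
    have := Int.mul_ediv_add_emod (w p - 1) (n:ℤ)
    omega
  have hwq : w q = (n:ℤ) * Aq + Rq := by
    rw [hAq, hRq]
    have := Int.mul_ediv_add_emod (w q - 1) (n:ℤ)
    omega
  have hRp1 : 1 ≤ Rp := by
    have := Int.emod_nonneg (w p - 1) hnz
    omega
  have hRp2 : Rp ≤ (n:ℤ) := by
    have := Int.emod_lt_of_pos (w p - 1) hn0
    omega
  have hRq1 : 1 ≤ Rq := by
    have := Int.emod_nonneg (w q - 1) hnz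
    omega
  have hRq2 : Rq ≤ (n:ℤ) := by
    have := Int.emod_lt_of_pos (w q - 1) hn0
    omega
  have hD : w p < w q := hmono p q hp hpq hq
  have hRne : Rp ≠ Rq := by
    intro h
    have hdv : w q = w p + (Aq - Ap) * (n:ℤ) := by
      rw [hwp, hwq, h]; ring
    have hper2 := hper (Aq - Ap) p
    have heq : w (p + (Aq - Ap) * (n:ℤ)) = w q := by rw [hper2, hdv]
    have hinj := w.injective heq
    have h2 : (Aq - Ap) * (n:ℤ) = q - p := by omega
    rcases lt_trichotomy (Aq - Ap) 0 with hc | hc | hc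
    · have : (Aq - Ap) * (n:ℤ) ≤ (-1) * (n:ℤ) :=
        mul_le_mul_of_nonneg_right (by omega) (le_of_lt hn0)
      omega
    · rw [hc] at h2; omega
    · have : (1:ℤ) * (n:ℤ) ≤ (Aq - Ap) * (n:ℤ) :=
        mul_le_mul_of_nonneg_right (by omega) (le_of_lt hn0)
      omega
  have hkey : Rp < Rq → Aq ≤ Ap := by
    intro hR
    have hsp : w ((n:ℤ) + 1 - Rp) = (n:ℤ) + 1 - p + Ap * (n:ℤ) := by
      have h1 : (n:ℤ) + 1 - w p = ((n:ℤ) + 1 - Rp) + (-Ap) * (n:ℤ) := by rw [hwp]; ring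
      have h2 := hstar p
      rw [h1, hper (-Ap) ((n:ℤ)+1-Rp)] at h2
      linarith
    have hsq : w ((n:ℤ) + 1 - Rq) = (n:ℤ) + 1 - q + Aq * (n:ℤ) := by
      have h1 : (n:ℤ) + 1 - w q = ((n:ℤ) + 1 - Rq) + (-Aq) * (n:ℤ) := by rw [hwq]; ring
      have h2 := hstar q
      rw [h1, hper (-Aq) ((n:ℤ)+1-Rq)] at h2
      linarith
    have hlt := hmono ((n:ℤ)+1-Rq) ((n:ℤ)+1-Rp) (by omega) (by omega) (by omega)
    rw [hsp, hsq] at hlt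
    by_contra hc
    push_neg at hc
    have h1 : (1:ℤ) * (n:ℤ) ≤ (Aq - Ap) * (n:ℤ) :=
      mul_le_mul_of_nonneg_right (by omega) (le_of_lt hn0)
    have h2 : (Aq - Ap) * (n:ℤ) = Aq * (n:ℤ) - Ap * (n:ℤ) := by ring
    omega
  have hcount := count_card n (by omega) (w p - w q) (p - q) (by omega) (by omega)
  have he : -(w p - w q) - 1 = w q - w p - 1 := by ring
  rw [he] at hcount
  have harith : w q - w p - 1 = (Rq - Rp - 1) + (n:ℤ) * (Aq - Ap) := by
    rw [hwp, hwq]; ring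
  have hdiv : (w q - w p - 1)/(n:ℤ) = (Rq - Rp - 1)/(n:ℤ) + (Aq - Ap) := by
    rw [harith, Int.add_mul_ediv_left _ _ hnz]
  rcases lt_or_gt_of_ne hRne with h | h
  · have h0 : (Rq - Rp - 1)/(n:ℤ) = 0 := Int.ediv_eq_zero_of_lt (by omega) (by omega)
    have hle := hkey h
    rw [hcount, hdiv, h0]
    simp only [Int.toNat_eq_max]
    omega
  · have h0 : (Rq - Rp - 1)/(n:ℤ) = -1 := by
      have e1 : Rq - Rp - 1 = (Rq - Rp - 1 + (n:ℤ)) + (n:ℤ) * (-1) := by ring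
      rw [e1, Int.add_mul_ediv_left _ _ hnz,
        Int.ediv_eq_zero_of_lt (by omega) (by omega)]
      norm_num
    rw [hcount, hdiv, h0]
    simp only [Int.toNat_eq_max]
    omega

end St14

/-- Let `n ≥ 2` and `w ∈ Ω'_n` with `λ(w) = (a_1, …, a_n)`. Then
`ℓ(w) = ∑_{1 ≤ i < j ≤ n} max(a_j − a_i − 1, 0)`. -/
theorem statement14 (n : ℕ) (hn : 2 ≤ n) (w : Equiv.Perm ℤ) (hw : w ∈ Omega'Set n) :
    (ellA n w : ℤ) =
      ∑ p ∈ Finset.univ.filter (fun p : Fin n × Fin n => p.1 < p.2),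
        max (lam n w p.2 - lam n w p.1 - 1) 0 := by
  classical
  obtain ⟨hAff, hinv, hmin⟩ := hw
  have hA := hAff.1
  have hn0 : 0 < n := by omega
  have hminR : ∀ i : ℕ, 1 ≤ i → i ≤ n - 1 → ellA n (w * sGen n i) = ellA n w + 1 :=
    fun i h1 h2 => (hmin i h1 h2).2
  have hmono := St14.window_mono n hn w hA hminR
  have hstar := St14.star_eq n w hinv
  rw [St14.ellA_formula n hn0 w hA]
  push_cast
  have hz : ∀ x ∈ (Finset.Icc (1:ℤ) (n:ℤ)) ×ˢ (Finset.Icc (1:ℤ) (n:ℤ)),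
      ((St14.cfun n w x).card : ℤ) ≠ 0 → x.2 < x.1 := by
    intro x hx hne
    obtain ⟨h1, h2⟩ := Finset.mem_product.mp hx
    rw [Finset.mem_Icc] at h1 h2
    by_contra h
    push_neg at h
    apply hne
    have : St14.cfun n w x = ∅ := St14.cfun_zero n hn w hmono x.1 x.2 h1.1 h1.2 h2.2 h
    rw [this]
    simp
  rw [← Finset.sum_filter_of_ne hz]
  apply Finset.sum_nbij'
    (i := fun q : ℤ × ℤ => ((⟨(q.2-1).toNat ⊓ (n-1), by omega⟩ : Fin n),
      (⟨(q.1-1).toNat ⊓ (n-1), by omega⟩ : Fin n)))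
    (j := fun a : Fin n × Fin n => ((((a.2 : ℕ) : ℤ) + 1, ((a.1 : ℕ) : ℤ) + 1) : ℤ × ℤ))
  · intro q hq
    rw [Finset.mem_filter] at hq
    obtain ⟨hqA, hqlt⟩ := hq
    obtain ⟨h1, h2⟩ := Finset.mem_product.mp hqA
    rw [Finset.mem_Icc] at h1 h2
    rw [Finset.mem_filter]
    refine ⟨Finset.mem_univ _, ?_⟩
    simp only [Fin.mk_lt_mk]
    omega
  · intro a ha
    rw [Finset.mem_filter] at ha
    have h1 := a.1.isLt
    have h2 := a.2.isLt
    have hlt : (a.1 : ℕ) < (a.2 : ℕ) := ha.2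
    rw [Finset.mem_filter]
    constructor
    · refine Finset.mem_product.mpr ⟨Finset.mem_Icc.mpr ⟨by omega, by omega⟩,
        Finset.mem_Icc.mpr ⟨by omega, by omega⟩⟩
    · simp only
      omega
  · intro q hq
    rw [Finset.mem_filter] at hq
    obtain ⟨hqA, hqlt⟩ := hq
    obtain ⟨h1, h2⟩ := Finset.mem_product.mp hqA
    rw [Finset.mem_Icc] at h1 h2
    simp only
    rw [Prod.mk.injEq]
    constructor <;> omega
  · intro a ha
    rw [Finset.mem_filter] at ha
    have h1 := a.1.isLt
    have h2 := a.2.isLt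
    simp only
    rw [Prod.mk.injEq]
    constructor <;> (apply Fin.ext; simp only; omega)
  · intro q hq
    rw [Finset.mem_filter] at hq
    obtain ⟨hqA, hqlt⟩ := hq
    obtain ⟨h1, h2⟩ := Finset.mem_product.mp hqA
    rw [Finset.mem_Icc] at h1 h2
    have hpc := St14.pair_card n hn w hA hmono hstar q.2 q.1 h2.1 hqlt h1.2
    simp only [St14.cfun, lam]
    rw [Int.fdiv_eq_ediv_of_nonneg _ (by positivity), Int.fdiv_eq_ediv_of_nonneg _ (by positivity)]
    have e1 : ((((q.1-1).toNat ⊓ (n-1) : ℕ) : ℤ) + 1) = q.1 := by omega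
    have e2 : ((((q.2-1).toNat ⊓ (n-1) : ℕ) : ℤ) + 1) = q.2 := by omega
    rw [e1, e2]
    exact hpc
end
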